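/- arXiv:2211.06264 — 5 statements merged into one kernel-verified Lean document; each statement's English description precedes it below -/
import Mathlib

section
/- For every real t ≥ 1 and every positive integer n, the partial sum of μ(a)/a over integers a ≤ t coprime to n is bounded in absolute value by C · n/φ(n), where C is an absolute constant. -/
open ArithmeticFunction Finset
open scoped ArithmeticFunction.Moebius ArithmeticFunction.zeta

private lemma squarefree_prod_primes (s : Finset ℕ) (h : ∀ p ∈ s, p.Prime) :
    Squarefree (∏ p ∈ s, p) := by
  classical
  induction s using Finset.induction_on with
  | empty => simp
  | @insert a s ha ih =>
    rw [Finset.prod_insert ha]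
    have hap : a.Prime := h a (mem_insert_self a s)
    refine Nat.squarefree_mul_iff.mpr
      ⟨?_, hap.squarefree, ih fun p hp => h p (mem_insert_of_mem hp)⟩
    exact Nat.Coprime.prod_right fun p hp =>
      (Nat.coprime_primes hap (h p (mem_insert_of_mem hp))).mpr (fun he => ha (he ▸ hp))

private lemma sum_moebius_mul_div (k : ℕ) (hk : 1 ≤ k) :
    ∑ d ∈ Icc 1 k, (μ d : ℤ) * (k / d : ℕ) = 1 := by
  classical
  have h1 : ∀ n ∈ Icc 1 k, (∑ d ∈ n.divisors, (μ d : ℤ)) = if n = 1 then 1 else 0 := by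
    intro n _
    have h : (μ * ζ : ArithmeticFunction ℤ) n = (1 : ArithmeticFunction ℤ) n := by
      rw [moebius_mul_coe_zeta]
    rwa [coe_mul_zeta_apply, one_apply] at h
  have h2 : ∑ n ∈ Icc 1 k, (∑ d ∈ n.divisors, (μ d : ℤ)) = 1 := by
    rw [Finset.sum_congr rfl h1, Finset.sum_ite_eq' (Icc 1 k) 1 (fun _ => (1 : ℤ))]
    simp [hk]
  have h3 : ∀ n ∈ Icc 1 k, (∑ d ∈ n.divisors, (μ d : ℤ))
      = ∑ d ∈ Icc 1 k, if d ∣ n then (μ d : ℤ) else 0 := by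
    intro n hn
    rw [mem_Icc] at hn
    rw [Finset.sum_ite, Finset.sum_const_zero, add_zero]
    apply Finset.sum_congr _ (fun _ _ => rfl)
    ext d
    simp only [Nat.mem_divisors, Finset.mem_filter, mem_Icc]
    constructor
    · rintro ⟨hd, hn0⟩
      exact ⟨⟨Nat.pos_of_dvd_of_pos hd (by omega), le_trans (Nat.le_of_dvd (by omega) hd) hn.2⟩, hd⟩
    · rintro ⟨_, hd⟩
      exact ⟨hd, by omega⟩
  rw [Finset.sum_congr rfl h3, Finset.sum_comm] at h2
  rw [← h2]
  apply Finset.sum_congr rfl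
  intro d _
  rw [Finset.sum_ite, Finset.sum_const_zero, add_zero, Finset.sum_const, nsmul_eq_mul, mul_comm]
  congr 1
  have h4 : Icc 1 k = Ioc 0 k := rfl
  rw [h4]
  push_cast [Nat.Ioc_filter_dvd_card_eq_div]
  rfl

/-- Partial sums of `μ a / a` over `a ≤ k` coprime to `n`. -/
private noncomputable def T (n k : ℕ) : ℝ :=
  ∑ a ∈ (Finset.Icc 1 k).filter (fun a => Nat.Coprime a n), (μ a : ℝ) / a

private lemma base_bound (k : ℕ) : |∑ a ∈ Icc 1 k, (μ a : ℝ) / a| ≤ 2 := by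
  rcases Nat.eq_zero_or_pos k with rfl | hk
  · simp
  set S : ℝ := ∑ a ∈ Icc 1 k, (μ a : ℝ) / a with hS
  have hkpos : (0:ℝ) < k := by exact_mod_cast hk
  have key : (k:ℝ) * S = 1 + ∑ a ∈ Icc 1 k, (μ a : ℝ) * ((k:ℝ)/a - (k/a : ℕ)) := by
    have h1 : (k:ℝ) * S = ∑ a ∈ Icc 1 k, (μ a : ℝ) * ((k:ℝ)/a) := by
      rw [hS, Finset.mul_sum]
      exact Finset.sum_congr rfl fun a _ => by ring
    have h2 : ∑ a ∈ Icc 1 k, (μ a : ℝ) * (((k/a : ℕ) : ℝ)) = 1 := by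
      have hz := sum_moebius_mul_div k hk
      have hz' : ((∑ d ∈ Icc 1 k, (μ d : ℤ) * (k / d : ℕ) : ℤ) : ℝ) = 1 := by
        rw [hz]; norm_num
      push_cast at hz'
      exact hz'
    rw [h1, ← h2, ← Finset.sum_add_distrib]
    exact Finset.sum_congr rfl fun a _ => by ring
  have hb : |∑ a ∈ Icc 1 k, (μ a : ℝ) * ((k:ℝ)/a - (k/a : ℕ))| ≤ k := by
    calc |∑ a ∈ Icc 1 k, (μ a : ℝ) * ((k:ℝ)/a - (k/a : ℕ))|
        ≤ ∑ a ∈ Icc 1 k, |(μ a : ℝ) * ((k:ℝ)/a - (k/a : ℕ))| := Finset.abs_sum_le_sum_abs _ _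
      _ ≤ ∑ _a ∈ Icc 1 k, 1 := by
          apply Finset.sum_le_sum
          intro a ha
          rw [mem_Icc] at ha
          have hfl : ((k/a : ℕ) : ℝ) = ⌊(k:ℝ)/(a:ℝ)⌋₊ := by
            rw [Nat.floor_div_natCast]
            simp
          have h0 : (0:ℝ) ≤ (k:ℝ)/a := by positivity
          have hfrac0 : (0:ℝ) ≤ (k:ℝ)/a - (k/a : ℕ) := by
            rw [hfl]; have := Nat.floor_le h0; linarith
          have hfrac1 : (k:ℝ)/a - (k/a : ℕ) ≤ 1 := by
            rw [hfl]; have := (Nat.lt_floor_add_one ((k:ℝ)/a)).le; linarith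
          have hmu : |(μ a : ℝ)| ≤ 1 := by
            have := (abs_moebius_le_one (n := a))
            exact_mod_cast this
          rw [abs_mul]
          calc |(μ a : ℝ)| * |(k:ℝ)/a - (k/a : ℕ)| ≤ 1 * 1 := by
                apply mul_le_mul hmu _ (abs_nonneg _) zero_le_one
                rw [abs_of_nonneg hfrac0]; exact hfrac1
            _ = 1 := by ring
      _ = k := by simp
  have habs : |(k:ℝ) * S| ≤ 1 + k := by
    rw [key]
    calc |1 + ∑ a ∈ Icc 1 k, (μ a : ℝ) * ((k:ℝ)/a - (k/a : ℕ))|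
        ≤ |(1:ℝ)| + |∑ a ∈ Icc 1 k, (μ a : ℝ) * ((k:ℝ)/a - (k/a : ℕ))| := abs_add_le _ _
      _ ≤ 1 + k := by rw [abs_one]; linarith
  rw [abs_mul, abs_of_pos hkpos] at habs
  have hk1 : (1:ℝ) ≤ k := by exact_mod_cast hk
  rw [← le_div_iff₀' hkpos] at habs
  calc |S| ≤ (1 + k) / k := habs
    _ ≤ 2 := by rw [div_le_iff₀ hkpos]; linarith

private lemma rec_identity (p m k : ℕ) (hp : p.Prime) (hpm : ¬ p ∣ m) :
    T m k = T (p*m) k - (1/(p:ℝ)) * T (p*m) (k/p) := by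
  classical
  have hppos : 0 < p := hp.pos
  have hcpm : Nat.Coprime p m := (Nat.Prime.coprime_iff_not_dvd hp).mpr hpm
  have hsplit := Finset.sum_filter_add_sum_filter_not
    ((Icc 1 k).filter (fun a => Nat.Coprime a m)) (fun a => Nat.Coprime a p)
    (fun a => (μ a : ℝ) / a)
  have h1 : ∑ a ∈ (((Icc 1 k).filter (fun a => Nat.Coprime a m)).filter
      (fun a => Nat.Coprime a p)), (μ a : ℝ) / a = T (p*m) k := by
    unfold T
    rw [Finset.filter_filter]
    apply Finset.sum_congr _ (fun _ _ => rfl)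
    apply Finset.filter_congr
    intro a _
    rw [Nat.coprime_mul_iff_right]
    constructor
    · rintro ⟨h1, h2⟩; exact ⟨h2, h1⟩
    · rintro ⟨h1, h2⟩; exact ⟨h2, h1⟩
  have h2 : ∑ a ∈ (((Icc 1 k).filter (fun a => Nat.Coprime a m)).filter
      (fun a => ¬ Nat.Coprime a p)), (μ a : ℝ) / a
      = ∑ b ∈ (Icc 1 (k/p)).filter (fun b => Nat.Coprime b m), (μ (p*b) : ℝ) / (p*b) := by
    apply Finset.sum_bij' (fun a _ => a / p) (fun b _ => p * b)
    · intro a ha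
      simp only [Finset.mem_filter, mem_Icc] at ha ⊢
      obtain ⟨⟨⟨ha1, hak⟩, ham⟩, hap⟩ := ha
      have hpd : p ∣ a := by
        by_contra h
        exact hap (Nat.coprime_comm.mp ((Nat.Prime.coprime_iff_not_dvd hp).mpr h))
      refine ⟨⟨?_, Nat.div_le_div_right hak⟩, ?_⟩
      · exact (Nat.one_le_div_iff hppos).mpr (Nat.le_of_dvd (by omega) hpd)
      · exact Nat.Coprime.coprime_dvd_left (Nat.div_dvd_of_dvd hpd) ham
    · intro b hb
      simp only [Finset.mem_filter, mem_Icc] at hb ⊢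
      obtain ⟨⟨hb1, hbk⟩, hbm⟩ := hb
      refine ⟨⟨⟨Nat.mul_pos hppos (by omega), ?_⟩, (Nat.coprime_mul_iff_left).mpr ⟨hcpm, hbm⟩⟩, ?_⟩
      · calc p * b ≤ p * (k/p) := Nat.mul_le_mul_left p hbk
          _ ≤ k := Nat.mul_div_le k p
      · intro hcop
        exact (Nat.Prime.coprime_iff_not_dvd hp).mp (Nat.coprime_comm.mp hcop) ⟨b, rfl⟩
    · intro a ha
      simp only [Finset.mem_filter, mem_Icc] at ha
      obtain ⟨⟨⟨ha1, hak⟩, ham⟩, hap⟩ := ha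
      have hpd : p ∣ a := by
        by_contra h
        exact hap (Nat.coprime_comm.mp ((Nat.Prime.coprime_iff_not_dvd hp).mpr h))
      exact Nat.mul_div_cancel' hpd
    · intro b _
      exact Nat.mul_div_cancel_left b hppos
    · intro a ha
      simp only [Finset.mem_filter, mem_Icc] at ha
      obtain ⟨⟨⟨ha1, hak⟩, ham⟩, hap⟩ := ha
      have hpd : p ∣ a := by
        by_contra h
        exact hap (Nat.coprime_comm.mp ((Nat.Prime.coprime_iff_not_dvd hp).mpr h))
      have hA : p * (a / p) = a := Nat.mul_div_cancel' hpd
      have hc : ((p:ℝ)) * ((a/p : ℕ) : ℝ) = (a:ℝ) := by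
        rw [← Nat.cast_mul, hA]
      rw [hA, hc]
  have h3 : ∑ b ∈ (Icc 1 (k/p)).filter (fun b => Nat.Coprime b m), (μ (p*b) : ℝ) / (p*b)
      = -((1/(p:ℝ)) * T (p*m) (k/p)) := by
    have hsub : (Icc 1 (k/p)).filter (fun b => Nat.Coprime b (p*m))
        ⊆ (Icc 1 (k/p)).filter (fun b => Nat.Coprime b m) := by
      intro b hb
      simp only [Finset.mem_filter] at hb ⊢
      exact ⟨hb.1, (Nat.coprime_mul_iff_right.mp hb.2).2⟩
    have hvan : ∀ b ∈ (Icc 1 (k/p)).filter (fun b => Nat.Coprime b m),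
        b ∉ (Icc 1 (k/p)).filter (fun b => Nat.Coprime b (p*m)) → (μ (p*b) : ℝ) / (p*b) = 0 := by
      intro b hb hb'
      simp only [Finset.mem_filter, mem_Icc] at hb hb'
      have hbp : p ∣ b := by
        by_contra h
        exact hb' ⟨hb.1, Nat.coprime_mul_iff_right.mpr
          ⟨Nat.coprime_comm.mp ((hp.coprime_iff_not_dvd).mpr h), hb.2⟩⟩
      have hns : ¬ Squarefree (p*b) := by
        intro hs
        exact (Nat.squarefree_iff_prime_squarefree.mp hs p hp) (mul_dvd_mul_left p hbp)
      rw [moebius_eq_zero_of_not_squarefree hns]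
      simp
    rw [← Finset.sum_subset hsub hvan]
    unfold T
    rw [Finset.mul_sum, ← Finset.sum_neg_distrib]
    apply Finset.sum_congr rfl
    intro b hb
    simp only [Finset.mem_filter, mem_Icc] at hb
    have hbp : Nat.Coprime p b := Nat.coprime_comm.mp (Nat.coprime_mul_iff_right.mp hb.2).1
    have hmul : μ (p*b) = μ p * μ b := isMultiplicative_moebius.map_mul_of_coprime hbp
    have hb0 : (b:ℝ) ≠ 0 := by exact_mod_cast (by omega : b ≠ 0)
    have hp0 : (p:ℝ) ≠ 0 := by exact_mod_cast hppos.ne'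
    rw [hmul, moebius_apply_prime hp]
    push_cast
    field_simp
    try ring
  rw [h1, h2, h3] at hsplit
  unfold T at hsplit ⊢
  linarith [hsplit]

private lemma sq_bound : ∀ n, Squarefree n → ∀ k, |T n k| ≤ 2 * n / Nat.totient n := by
  intro n
  induction n using Nat.strong_induction_on with
  | _ n ih =>
    intro hn k
    rcases eq_or_ne n 1 with rfl | hn1
    · have hT : T 1 k = ∑ a ∈ Icc 1 k, (μ a : ℝ)/a := by
        unfold T
        apply Finset.sum_congr _ (fun _ _ => rfl)
        simp [Nat.coprime_one_right]
      rw [hT]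
      simpa using base_bound k
    · set p := n.minFac with hpdef
      have hp : p.Prime := Nat.minFac_prime hn1
      have hpn : p ∣ n := Nat.minFac_dvd n
      set m := n / p with hmdef
      have hnm : n = p * m := (Nat.mul_div_cancel' hpn).symm
      have hn0 : n ≠ 0 := hn.ne_zero
      have hm0 : m ≠ 0 := by rintro h; rw [h, mul_zero] at hnm; exact hn0 hnm
      have hmlt : m < n := by
        rw [hnm]
        calc m = 1 * m := (one_mul m).symm
          _ < p * m := by
              exact Nat.mul_lt_mul_of_lt_of_le hp.one_lt (le_refl m) (Nat.pos_of_ne_zero hm0)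
      have hsm : Squarefree m := hn.squarefree_of_dvd ⟨p, by rw [hnm]; ring⟩
      have hpm : ¬ p ∣ m := by
        intro h
        have hd : p * p ∣ n := by rw [hnm]; exact mul_dvd_mul_left p h
        exact (Nat.squarefree_iff_prime_squarefree.mp hn p hp) hd
      have ihm := ih m hmlt hsm
      have hφm : (0:ℝ) < (Nat.totient m : ℝ) := by
        exact_mod_cast Nat.totient_pos.mpr (Nat.pos_of_ne_zero hm0)
      have hφn : Nat.totient n = (p-1) * Nat.totient m := by
        rw [hnm, Nat.totient_mul ((hp.coprime_iff_not_dvd).mpr hpm), Nat.totient_prime hp]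
      have hp1 : (1:ℝ) < p := by exact_mod_cast hp.one_lt
      have hkey : 2 * (m:ℝ) / Nat.totient m + (1/(p:ℝ)) * (2 * n / Nat.totient n)
          = 2 * n / Nat.totient n := by
        have hcast : ((Nat.totient n : ℝ)) = ((p:ℝ)-1) * Nat.totient m := by
          rw [hφn, Nat.cast_mul, Nat.cast_sub hp.one_le, Nat.cast_one]
        have hnmr : (n:ℝ) = (p:ℝ) * m := by exact_mod_cast congrArg (Nat.cast : ℕ → ℝ) hnm
        rw [hcast, hnmr]
        have h1 : ((p:ℝ) - 1) ≠ 0 := by linarith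
        have h2 : (p:ℝ) ≠ 0 := by linarith
        field_simp
        ring
      induction k using Nat.strong_induction_on with
      | _ k ihk =>
        rcases Nat.eq_zero_or_pos k with rfl | hk
        · have hT0 : T n 0 = 0 := by unfold T; simp
          rw [hT0, abs_zero]
          positivity
        · have hrec := rec_identity p m k hp hpm
          rw [← hnm] at hrec
          have hklt : k / p < k := Nat.div_lt_self hk hp.one_lt
          have h1 := ihm k
          have h2 := ihk (k/p) hklt
          have hTnk : T n k = T m k + (1/(p:ℝ)) * T n (k/p) := by linarith [hrec]
          have hinv : (0:ℝ) < 1/(p:ℝ) := by positivity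
          calc |T n k| ≤ |T m k| + (1/(p:ℝ)) * |T n (k/p)| := by
                rw [hTnk]
                refine (abs_add_le _ _).trans ?_
                rw [abs_mul, abs_of_pos hinv]
            _ ≤ 2*(m:ℝ)/Nat.totient m + (1/(p:ℝ)) * (2*n/Nat.totient n) := by
                have h3 := mul_le_mul_of_nonneg_left h2 hinv.le
                linarith
            _ = 2*(n:ℝ)/Nat.totient n := hkey

/-- For every real `t ≥ 1` and every positive integer `n`, the partial sum of `μ(a)/a`
over integers `a ≤ t` coprime to `n` is bounded by `C · n / φ(n)` for an absolute
constant `C`. -/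
theorem moebius_partial_sum_coprime_bound :
    ∃ C : ℝ, 0 < C ∧ ∀ t : ℝ, 1 ≤ t → ∀ n : ℕ, 0 < n →
      |∑ a ∈ (Finset.Icc 1 ⌊t⌋₊).filter (fun a => Nat.Coprime a n),
          (μ a : ℝ) / a| ≤ C * n / Nat.totient n := by
  classical
  refine ⟨2, by norm_num, ?_⟩
  intro t _ n hn
  set k := ⌊t⌋₊ with hk
  set r := ∏ p ∈ n.primeFactors, p with hr
  have hprimes : ∀ p ∈ n.primeFactors, p.Prime := fun p hp => Nat.prime_of_mem_primeFactors hp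
  have hrsq : Squarefree r := squarefree_prod_primes _ hprimes
  have hr0 : r ≠ 0 := hrsq.ne_zero
  have hrpf : r.primeFactors = n.primeFactors := Nat.primeFactors_prod hprimes
  have hfil : (Finset.Icc 1 k).filter (fun a => Nat.Coprime a n)
      = (Finset.Icc 1 k).filter (fun a => Nat.Coprime a r) := by
    apply Finset.filter_congr
    intro a ha
    rw [mem_Icc] at ha
    have ha0 : a ≠ 0 := by omega
    rw [← Nat.disjoint_primeFactors ha0 hn.ne', ← Nat.disjoint_primeFactors ha0 hr0, hrpf]
  have hφn : (0:ℝ) < (Nat.totient n : ℝ) := by exact_mod_cast Nat.totient_pos.mpr hn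
  have hφr : (0:ℝ) < (Nat.totient r : ℝ) := by
    exact_mod_cast Nat.totient_pos.mpr (Nat.pos_of_ne_zero hr0)
  have hratio : (n:ℝ) / Nat.totient n = (r:ℝ) / Nat.totient r := by
    have h1 := Nat.totient_mul_prod_primeFactors n
    have h2 := Nat.totient_mul_prod_primeFactors r
    rw [hrpf, ← hr] at h2
    rw [← hr] at h1
    have hnat : n * Nat.totient r = r * Nat.totient n := by
      have h3 : (n * Nat.totient r) * r = (r * Nat.totient n) * r := by
        calc (n * Nat.totient r) * r = n * (Nat.totient r * r) := by ring
          _ = n * (r * ∏ p ∈ n.primeFactors, (p-1)) := by rw [h2]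
          _ = r * (n * ∏ p ∈ n.primeFactors, (p-1)) := by ring
          _ = r * (Nat.totient n * r) := by rw [h1]
          _ = (r * Nat.totient n) * r := by ring
      exact Nat.eq_of_mul_eq_mul_right (Nat.pos_of_ne_zero hr0) h3
    rw [div_eq_div_iff hφn.ne' hφr.ne']
    exact_mod_cast hnat
  have hb := sq_bound r hrsq k
  unfold T at hb
  calc |∑ a ∈ (Finset.Icc 1 k).filter (fun a => Nat.Coprime a n), (μ a : ℝ) / a|
      = |∑ a ∈ (Finset.Icc 1 k).filter (fun a => Nat.Coprime a r), (μ a : ℝ) / a| := by rw [hfil]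
    _ ≤ 2 * r / Nat.totient r := hb
    _ = 2 * n / Nat.totient n := by
        rw [mul_div_assoc, mul_div_assoc, ← hratio]
end

section
/- Let q be a positive integer and s a complex number. Then Σ_{w|q} μ(q/w) φ(w) Σ_{f|q, (f,w)=1} μ(f) (φ(q/f)/q) w^{-s} Π_{p|f}(1 - p^{-s}) = φ*(q) · q^{-s} · Π_{p|q}(1 - p^{s-1}), where φ*(q) = q Π_{p||q}(1 - 2/p) Π_{p²|q}(1 - 1/p)² is the number of primitive Dirichlet characters modulo q. -/
open ArithmeticFunction Finset
open scoped ArithmeticFunction.Moebius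

/-- The number of primitive Dirichlet characters modulo `q`:
`φ*(q) = q · Π_{p‖q} (1 - 2/p) · Π_{p²∣q} (1 - 1/p)²`. -/
noncomputable def phiStar (q : ℕ) : ℝ :=
  q * (∏ p ∈ q.primeFactors.filter (fun p => ¬ p ^ 2 ∣ q), (1 - 2 / (p : ℝ)))
    * (∏ p ∈ q.primeFactors.filter (fun p => p ^ 2 ∣ q), (1 - 1 / (p : ℝ)) ^ 2)

namespace DivSumAux

lemma natCast_mul_cpow (m n : ℕ) (z : ℂ) :
    ((m * n : ℕ) : ℂ) ^ z = (m : ℂ) ^ z * (n : ℂ) ^ z := by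
  have h := Complex.mul_cpow_ofReal_nonneg (Nat.cast_nonneg (α := ℝ) m)
    (Nat.cast_nonneg (α := ℝ) n) z
  push_cast at h ⊢
  exact h

lemma natCast_pow_cpow (p a : ℕ) (z : ℂ) :
    ((p ^ a : ℕ) : ℂ) ^ z = ((p : ℂ) ^ z) ^ a := by
  induction a with
  | zero => simp
  | succ a ih => rw [pow_succ, natCast_mul_cpow, ih, pow_succ]

lemma sum_divisors_mul_eq {m n : ℕ} (h : m.Coprime n) (f : ℕ → ℂ) :
    ∑ d ∈ (m * n).divisors, f d = ∑ a ∈ m.divisors, ∑ b ∈ n.divisors, f (a * b) := by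
  rcases eq_or_ne m 0 with rfl | hm
  · simp
  rcases eq_or_ne n 0 with rfl | hn
  · simp
  rw [← Finset.sum_product']
  refine (Finset.sum_nbij' (fun x => x.1 * x.2) (fun d => (d.gcd m, d.gcd n))
    ?_ ?_ ?_ ?_ ?_).symm
  · rintro ⟨a, b⟩ hx
    simp only [Finset.mem_product, Nat.mem_divisors] at hx ⊢
    exact ⟨mul_dvd_mul hx.1.1 hx.2.1, mul_ne_zero hm hn⟩
  · intro d hd
    simp only [Nat.mem_divisors] at hd
    simp only [Finset.mem_product, Nat.mem_divisors]
    exact ⟨⟨Nat.gcd_dvd_right _ _, hm⟩, ⟨Nat.gcd_dvd_right _ _, hn⟩⟩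
  · rintro ⟨a, b⟩ hx
    simp only [Finset.mem_product, Nat.mem_divisors] at hx
    obtain ⟨⟨ha, _⟩, hb, _⟩ := hx
    have hbm : b.Coprime m := (h.symm.coprime_dvd_left hb)
    have han : a.Coprime n := (h.coprime_dvd_left ha)
    have h1 : (a * b).gcd m = a := by
      refine Nat.dvd_antisymm ?_ (Nat.dvd_gcd (dvd_mul_right _ _) ha)
      have hg : ((a * b).gcd m).Coprime b :=
        Nat.Coprime.coprime_dvd_left (Nat.gcd_dvd_right (a * b) m) hbm.symm
      exact hg.dvd_of_dvd_mul_right (Nat.gcd_dvd_left _ _)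
    have h2 : (a * b).gcd n = b := by
      refine Nat.dvd_antisymm ?_ (Nat.dvd_gcd (dvd_mul_left _ _) hb)
      have hg : ((a * b).gcd n).Coprime a :=
        Nat.Coprime.coprime_dvd_left (Nat.gcd_dvd_right (a * b) n) han.symm
      exact hg.dvd_of_dvd_mul_left (Nat.gcd_dvd_left _ _)
    simp [h1, h2]
  · intro d hd
    simp only [Nat.mem_divisors] at hd
    exact (Nat.gcd_mul_gcd_eq_iff_dvd_mul_of_coprime h).mpr hd.1
  · rintro ⟨a, b⟩ _
    rfl

variable (s : ℂ)

noncomputable def Fterm (q w f : ℕ) : ℂ :=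
  (μ (q / w) : ℂ) * (Nat.totient w : ℂ) *
    ((μ f : ℂ) * ((Nat.totient (q / f) : ℂ) / (q : ℂ)) * (w : ℂ) ^ (-s) *
      ∏ p ∈ f.primeFactors, (1 - (p : ℂ) ^ (-s)))

noncomputable def F (q : ℕ) : ℂ :=
  ∑ w ∈ q.divisors, ∑ f ∈ q.divisors, if f.Coprime w then Fterm s q w f else 0

noncomputable def G (q : ℕ) : ℂ :=
  (phiStar q : ℂ) * (q : ℂ) ^ (-s) * ∏ p ∈ q.primeFactors, (1 - (p : ℂ) ^ (s - 1))

lemma Fterm_mul {m n a b c d : ℕ} (hm : m ≠ 0) (hn : n ≠ 0) (h : m.Coprime n)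
    (ha : a ∣ m) (hb : b ∣ n) (hc : c ∣ m) (hd : d ∣ n) :
    Fterm s (m * n) (a * b) (c * d) = Fterm s m a c * Fterm s n b d := by
  have hc0 : c ≠ 0 := fun h0 => hm (by simpa [h0] using hc)
  have hd0 : d ≠ 0 := fun h0 => hn (by simpa [h0] using hd)
  have h1 : (m / a).Coprime (n / b) :=
    (h.coprime_dvd_left (Nat.div_dvd_of_dvd ha)).coprime_dvd_right (Nat.div_dvd_of_dvd hb)
  have h2 : a.Coprime b := (h.coprime_dvd_left ha).coprime_dvd_right hb
  have h3 : c.Coprime d := (h.coprime_dvd_left hc).coprime_dvd_right hd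
  have h4 : (m / c).Coprime (n / d) :=
    (h.coprime_dvd_left (Nat.div_dvd_of_dvd hc)).coprime_dvd_right (Nat.div_dvd_of_dvd hd)
  rw [Fterm, Fterm, Fterm, ← Nat.div_mul_div_comm ha hb, ← Nat.div_mul_div_comm hc hd,
    isMultiplicative_moebius.map_mul_of_coprime h1, Nat.totient_mul h2,
    isMultiplicative_moebius.map_mul_of_coprime h3, Nat.totient_mul h4,
    natCast_mul_cpow, Nat.primeFactors_mul hc0 hd0,
    Finset.prod_union (Nat.Coprime.disjoint_primeFactors h3), Nat.cast_mul]
  push_cast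
  ring

lemma F_mul {m n : ℕ} (hm : m ≠ 0) (hn : n ≠ 0) (h : m.Coprime n) :
    F s (m * n) = F s m * F s n := by
  rw [F, F, F, sum_divisors_mul_eq h, Finset.sum_mul_sum]
  refine Finset.sum_congr rfl fun a hA => Finset.sum_congr rfl fun b hB => ?_
  rw [sum_divisors_mul_eq h, Finset.sum_mul_sum]
  refine Finset.sum_congr rfl fun c hC => Finset.sum_congr rfl fun d hD => ?_
  simp only [Nat.mem_divisors] at hA hB hC hD
  obtain ⟨ha, -⟩ := hA; obtain ⟨hb, -⟩ := hB; obtain ⟨hc, -⟩ := hC; obtain ⟨hd, -⟩ := hD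
  have hiff : (c * d).Coprime (a * b) ↔ (c.Coprime a ∧ d.Coprime b) := by
    constructor
    · intro hcop
      exact ⟨(hcop.coprime_dvd_left (dvd_mul_right c d)).coprime_dvd_right (dvd_mul_right a b),
        (hcop.coprime_dvd_left (dvd_mul_left d c)).coprime_dvd_right (dvd_mul_left b a)⟩
    · rintro ⟨h1, h2⟩
      have hcb : c.Coprime b := (h.coprime_dvd_left hc).coprime_dvd_right hb
      have hda : d.Coprime a := (h.symm.coprime_dvd_left hd).coprime_dvd_right ha
      exact Nat.Coprime.mul (h1.mul_right hcb) (hda.mul_right h2)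
  by_cases h1 : c.Coprime a <;> by_cases h2 : d.Coprime b
  · rw [if_pos (hiff.mpr ⟨h1, h2⟩), if_pos h1, if_pos h2, Fterm_mul s hm hn h ha hb hc hd]
  · rw [if_neg (fun hc' => h2 (hiff.mp hc').2), if_neg h2, mul_zero]
  · rw [if_neg (fun hc' => h1 (hiff.mp hc').1), if_neg h1, zero_mul]
  · rw [if_neg (fun hc' => h1 (hiff.mp hc').1), if_neg h1, zero_mul]

lemma phiStar_mul {m n : ℕ} (hm : m ≠ 0) (hn : n ≠ 0) (h : m.Coprime n) :
    phiStar (m * n) = phiStar m * phiStar n := by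
  have hunion := Nat.primeFactors_mul hm hn
  have hdisj : Disjoint m.primeFactors n.primeFactors := Nat.Coprime.disjoint_primeFactors h
  have key : ∀ p : ℕ, p ∈ m.primeFactors → (p ^ 2 ∣ m * n ↔ p ^ 2 ∣ m) := by
    intro p hp
    have hpn : (p ^ 2).Coprime n :=
      Nat.Coprime.pow_left _ ((h.coprime_dvd_left (Nat.dvd_of_mem_primeFactors hp)))
    exact ⟨fun hdvd => hpn.dvd_of_dvd_mul_right hdvd, fun hdvd => hdvd.mul_right n⟩
  have key' : ∀ p : ℕ, p ∈ n.primeFactors → (p ^ 2 ∣ m * n ↔ p ^ 2 ∣ n) := by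
    intro p hp
    have hpm : (p ^ 2).Coprime m :=
      Nat.Coprime.pow_left _ ((h.symm.coprime_dvd_left (Nat.dvd_of_mem_primeFactors hp)))
    exact ⟨fun hdvd => hpm.dvd_of_dvd_mul_left hdvd, fun hdvd => hdvd.mul_left m⟩
  have e1 : (m * n).primeFactors.filter (fun p => ¬ p ^ 2 ∣ m * n)
      = m.primeFactors.filter (fun p => ¬ p ^ 2 ∣ m)
        ∪ n.primeFactors.filter (fun p => ¬ p ^ 2 ∣ n) := by
    rw [hunion, Finset.filter_union]
    congr 1
    · exact Finset.filter_congr (fun p hp => not_congr (key p hp))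
    · exact Finset.filter_congr (fun p hp => not_congr (key' p hp))
  have e2 : (m * n).primeFactors.filter (fun p => p ^ 2 ∣ m * n)
      = m.primeFactors.filter (fun p => p ^ 2 ∣ m)
        ∪ n.primeFactors.filter (fun p => p ^ 2 ∣ n) := by
    rw [hunion, Finset.filter_union]
    congr 1
    · exact Finset.filter_congr (fun p hp => key p hp)
    · exact Finset.filter_congr (fun p hp => key' p hp)
  rw [phiStar, phiStar, phiStar, e1, e2,
    Finset.prod_union (hdisj.mono (Finset.filter_subset _ _) (Finset.filter_subset _ _)),
    Finset.prod_union (hdisj.mono (Finset.filter_subset _ _) (Finset.filter_subset _ _)),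
    Nat.cast_mul]
  ring

lemma G_mul {m n : ℕ} (hm : m ≠ 0) (hn : n ≠ 0) (h : m.Coprime n) :
    G s (m * n) = G s m * G s n := by
  rw [G, G, G, phiStar_mul hm hn h, natCast_mul_cpow, Nat.primeFactors_mul hm hn,
    Finset.prod_union (Nat.Coprime.disjoint_primeFactors h)]
  push_cast
  ring

lemma F_prime_pow {p : ℕ} (pp : p.Prime) (k : ℕ) (hk : k ≠ 0) :
    F s (p ^ k) = G s (p ^ k) := by
  have hx0 : (p : ℂ) ≠ 0 := Nat.cast_ne_zero.mpr pp.pos.ne'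
  have hv0 : (p : ℂ) ^ s ≠ 0 := by
    simp [Complex.cpow_eq_zero_iff, hx0]
  rw [F, Nat.divisors_prime_pow pp, Finset.sum_map]
  simp only [Function.Embedding.coeFn_mk, Finset.sum_map]
  have inner_eq : ∀ i, 1 ≤ i →
      (∑ j' ∈ Finset.range (k + 1),
        if Nat.Coprime (p ^ j') (p ^ i) then Fterm s (p ^ k) (p ^ i) (p ^ j') else 0)
      = Fterm s (p ^ k) (p ^ i) 1 := by
    intro i hi
    have hsub : ({0} : Finset ℕ) ⊆ Finset.range (k + 1) :=
      Finset.singleton_subset_iff.mpr (Finset.mem_range.mpr (by omega))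
    have hzero : ∀ j' ∈ Finset.range (k + 1), j' ∉ ({0} : Finset ℕ) →
        (if Nat.Coprime (p ^ j') (p ^ i) then Fterm s (p ^ k) (p ^ i) (p ^ j') else 0) = 0 := by
      intro j' _ hj'
      rw [Finset.mem_singleton] at hj'
      by_cases hj1 : j' = 1
      · subst hj1
        rw [if_neg]
        intro hcop
        rw [pow_one] at hcop
        exact (pp.coprime_iff_not_dvd.mp hcop) (dvd_pow_self p (by omega : i ≠ 0))
      · have hmu : μ (p ^ j') = 0 := by
          rw [moebius_apply_prime_pow pp hj', if_neg hj1]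
        split_ifs
        · simp [Fterm, hmu]
        · rfl
    rw [← Finset.sum_subset hsub hzero, Finset.sum_singleton, pow_zero,
      if_pos (Nat.coprime_one_left _)]
  match k, hk with
  | 1, _ =>
    rw [Finset.sum_range_succ, Finset.sum_range_one, inner_eq 1 le_rfl,
      Finset.sum_range_succ, Finset.sum_range_one]
    rw [pow_zero, pow_one, if_pos (Nat.coprime_one_left _), if_pos (Nat.coprime_one_right _)]
    simp only [Fterm, G, pow_zero, pow_one, Nat.div_one, Nat.div_self pp.pos]
    rw [moebius_apply_one, moebius_apply_prime pp, Nat.totient_one, Nat.totient_prime pp,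
      pp.primeFactors, Nat.primeFactors_one, Finset.prod_empty, Finset.prod_singleton,
      Finset.prod_singleton, phiStar, pp.primeFactors]
    have h2 : ¬ p ^ 2 ∣ p := fun hdvd =>
      absurd (Nat.le_of_dvd pp.pos hdvd) (by nlinarith [pp.two_le])
    rw [Finset.filter_singleton, Finset.filter_singleton, if_pos h2, if_neg (fun h => h2 h),
      Finset.prod_singleton, Finset.prod_empty]
    simp only [Complex.cpow_neg, Nat.cast_one, Complex.one_cpow, inv_one]
    rw [Complex.cpow_sub _ _ hx0, Complex.cpow_one]
    push_cast [Nat.cast_sub pp.one_le]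
    field_simp
    ring
  | (j + 2), _ =>
    have hsub : ({j + 1, j + 2} : Finset ℕ) ⊆ Finset.range (j + 2 + 1) := by
      intro x hx
      simp only [Finset.mem_insert, Finset.mem_singleton] at hx
      rcases hx with rfl | rfl <;> simp [Finset.mem_range]
    have hzero : ∀ i ∈ Finset.range (j + 2 + 1), i ∉ ({j + 1, j + 2} : Finset ℕ) →
        (∑ j' ∈ Finset.range (j + 2 + 1),
          if Nat.Coprime (p ^ j') (p ^ i) then Fterm s (p ^ (j + 2)) (p ^ i) (p ^ j') else 0)
        = 0 := by
      intro i hi hni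
      rw [Finset.mem_range] at hi
      simp only [Finset.mem_insert, Finset.mem_singleton] at hni
      push_neg at hni
      have hdiv : p ^ (j + 2) / p ^ i = p ^ (j + 2 - i) := Nat.pow_div (by omega) pp.pos
      have hmu : μ (p ^ (j + 2 - i)) = 0 := by
        rw [moebius_apply_prime_pow pp (by omega), if_neg (by omega)]
      refine Finset.sum_eq_zero fun j' _ => ?_
      split_ifs
      · simp [Fterm, hdiv, hmu]
      · rfl
    rw [← Finset.sum_subset hsub hzero,
      Finset.sum_pair (by omega : j + 1 ≠ j + 2),
      inner_eq (j + 1) (by omega), inner_eq (j + 2) (by omega)]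
    have hdiv1 : p ^ (j + 2) / p ^ (j + 1) = p := by
      rw [Nat.pow_div (by omega) pp.pos, show j + 2 - (j + 1) = 1 by omega, pow_one]
    have hdiv2 : p ^ (j + 2) / p ^ (j + 2) = 1 := Nat.div_self (pow_pos pp.pos _)
    have htot1 : Nat.totient (p ^ (j + 2)) = p ^ (j + 1) * (p - 1) := by
      rw [Nat.totient_prime_pow pp (by omega), show j + 2 - 1 = j + 1 by omega]
    have htot2 : Nat.totient (p ^ (j + 1)) = p ^ j * (p - 1) := by
      rw [Nat.totient_prime_pow pp (by omega), show j + 1 - 1 = j by omega]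
    have hpf : (p ^ (j + 2)).primeFactors = {p} :=
      Nat.primeFactors_prime_pow (by omega) pp
    have hsq : p ^ 2 ∣ p ^ (j + 2) := pow_dvd_pow p (by omega)
    simp only [Fterm, G, Nat.div_one, hdiv1, hdiv2, htot1, htot2, hpf,
      Nat.primeFactors_one, Finset.prod_empty, Finset.prod_singleton,
      moebius_apply_one, moebius_apply_prime pp, Nat.totient_one, phiStar]
    rw [Finset.filter_singleton, Finset.filter_singleton, if_neg (fun h => h hsq), if_pos hsq,
      Finset.prod_empty, Finset.prod_singleton]
    simp only [natCast_pow_cpow]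
    simp only [Complex.cpow_neg]
    rw [Complex.cpow_sub _ _ hx0, Complex.cpow_one]
    push_cast [Nat.cast_sub pp.one_le]
    field_simp
    linear_combination (-((p:ℂ)^4 * (p:ℂ)^(j*2) * (-1 + 2*(p:ℂ) - (p:ℂ)^2)) * ((p:ℂ)^s)⁻¹^(j+1)) * mul_inv_cancel₀ hv0

theorem main (q : ℕ) (hq : 0 < q) : F s q = G s q := by
  induction q using Nat.recOnPosPrimePosCoprime with
  | prime_pow p n hp hn => exact F_prime_pow s hp n hn.ne'
  | zero => exact absurd hq (lt_irrefl 0)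
  | one => simp [F, G, Fterm, phiStar]
  | coprime p n hp hn hcop ihp ihn =>
      rw [F_mul s (by omega) (by omega) hcop, G_mul s (by omega) (by omega) hcop,
        ihp (by omega), ihn (by omega)]

end DivSumAux

/-- Lemma on sums over divisors of `q`:
`Σ_{w|q} μ(q/w) φ(w) Σ_{f|q, (f,w)=1} μ(f) (φ(q/f)/q) w^{-s} Π_{p|f}(1 - p^{-s})`
equals `φ*(q) · q^{-s} · Π_{p|q}(1 - p^{s-1})`. -/
theorem divisor_sum_identity (q : ℕ) (hq : 0 < q) (s : ℂ) :
    ∑ w ∈ q.divisors, (μ (q / w) : ℂ) * (Nat.totient w : ℂ) *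
      ∑ f ∈ q.divisors.filter (fun f => Nat.Coprime f w),
        (μ f : ℂ) * ((Nat.totient (q / f) : ℂ) / (q : ℂ)) * (w : ℂ) ^ (-s) *
          ∏ p ∈ f.primeFactors, (1 - (p : ℂ) ^ (-s))
    = (phiStar q : ℂ) * (q : ℂ) ^ (-s) * ∏ p ∈ q.primeFactors, (1 - (p : ℂ) ^ (s - 1)) := by
  have h := DivSumAux.main s q hq
  rw [DivSumAux.F, DivSumAux.G] at h
  rw [← h]
  refine Finset.sum_congr rfl fun w hw => ?_
  rw [Finset.mul_sum, Finset.sum_filter]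
  refine Finset.sum_congr rfl fun f hf => ?_
  split_ifs with hco
  · rw [DivSumAux.Fterm]
  · rfl
end

section
/- Let q be a positive integer and m an integer coprime to q. Then the sum of χ(m) over all odd primitive Dirichlet characters χ modulo q equals (1/2) Σ_{uw=q, m≡1 (mod w)} μ(u)φ(w) − (1/2) Σ_{uw=q, m≡−1 (mod w)} μ(u)φ(w). -/
open ArithmeticFunction Finset
open scoped ArithmeticFunction.Moebius

section Aux

open DirichletCharacter ZMod

/-- If `u` is a unit mod `n` that is `≡ 1` mod `gcd a b`, then `u = v * w` with
`v ≡ 1` mod `b` and `w ≡ 1` mod `a`. -/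
lemma exists_mul_eq_of_gcd {n a b : ℕ} [NeZero n] (ha : a ∣ n) (hb : b ∣ n)
    (u : (ZMod n)ˣ) (hu : ZMod.unitsMap ((Nat.gcd_dvd_left a b).trans ha) u = 1) :
    ∃ v w : (ZMod n)ˣ, ZMod.unitsMap hb v = 1 ∧ ZMod.unitsMap ha w = 1 ∧ u = v * w := by
  set x : ℕ := ((u : ZMod n)).val with hx
  have hxu : ((x : ZMod n)) = (u : ZMod n) := ZMod.natCast_rightInverse _
  have hxn : Nat.Coprime x n := ZMod.val_coe_unit_coprime u
  -- x ≡ 1 mod gcd a b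
  have hg : x ≡ 1 [MOD Nat.gcd a b] := by
    have h1 : ((x : ZMod (Nat.gcd a b))) = ((1 : ℕ) : ZMod (Nat.gcd a b)) := by
      have := congrArg (fun z : (ZMod (Nat.gcd a b))ˣ => (z : ZMod (Nat.gcd a b))) hu
      simp only [ZMod.unitsMap_def, Units.coe_map, MonoidHom.coe_coe] at this
      rw [← hxu] at this
      simpa using this
    exact (ZMod.natCast_eq_natCast_iff _ _ _).mp h1
  obtain ⟨k, hka, hkb⟩ := Nat.chineseRemainder' hg
  have hkacop : Nat.Coprime k a := by
    have : Nat.gcd k a = Nat.gcd x a := hka.gcd_eq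
    rw [Nat.Coprime, this]
    exact hxn.coprime_dvd_right ha
  have hkbcop : Nat.Coprime k b := by
    have : Nat.gcd k b = Nat.gcd 1 b := hkb.gcd_eq
    rw [Nat.Coprime, this, Nat.gcd_one_left]
  have hkL : Nat.Coprime k (Nat.lcm a b) :=
    Nat.Coprime.coprime_dvd_right (Nat.lcm_dvd_mul a b) (hkacop.mul_right hkbcop)
  have hL : Nat.lcm a b ∣ n := Nat.lcm_dvd ha hb
  obtain ⟨v, hv⟩ := ZMod.unitsMap_surjective hL (ZMod.unitOfCoprime k hkL)
  have hva : ZMod.unitsMap ha v = ZMod.unitsMap ha u := by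
    have hcomp : ZMod.unitsMap ha v
        = ZMod.unitsMap (Nat.dvd_lcm_left a b) (ZMod.unitsMap hL v) := by
      rw [← MonoidHom.comp_apply, ZMod.unitsMap_comp]
    rw [hcomp, hv]
    ext
    simp only [ZMod.unitsMap_def, Units.coe_map, MonoidHom.coe_coe, ZMod.coe_unitOfCoprime,
      ZMod.castHom_apply]
    rw [← hxu, ZMod.cast_natCast (Nat.dvd_lcm_left a b), ZMod.cast_natCast ha]
    exact (ZMod.natCast_eq_natCast_iff _ _ _).mpr hka
  have hvb : ZMod.unitsMap hb v = 1 := by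
    have hcomp : ZMod.unitsMap hb v
        = ZMod.unitsMap (Nat.dvd_lcm_right a b) (ZMod.unitsMap hL v) := by
      rw [← MonoidHom.comp_apply, ZMod.unitsMap_comp]
    rw [hcomp, hv]
    ext
    simp only [ZMod.unitsMap_def, Units.coe_map, MonoidHom.coe_coe, ZMod.coe_unitOfCoprime,
      ZMod.castHom_apply, Units.val_one]
    rw [ZMod.cast_natCast (Nat.dvd_lcm_right a b)]
    have : ((k : ZMod b)) = ((1 : ℕ) : ZMod b) := (ZMod.natCast_eq_natCast_iff _ _ _).mpr hkb
    simpa using this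
  refine ⟨v, v⁻¹ * u, hvb, ?_, by group⟩
  rw [map_mul, map_inv, hva]
  group

variable {q : ℕ} [NeZero q] (χ : DirichletCharacter ℂ q)

lemma factorsThrough_gcd {a b : ℕ} (hfa : χ.FactorsThrough a) (hfb : χ.FactorsThrough b) :
    χ.FactorsThrough (Nat.gcd a b) := by
  have ha := hfa.dvd
  have hb := hfb.dvd
  rw [factorsThrough_iff_ker_unitsMap ((Nat.gcd_dvd_left a b).trans ha)]
  rw [factorsThrough_iff_ker_unitsMap ha] at hfa
  rw [factorsThrough_iff_ker_unitsMap hb] at hfb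
  intro u hu
  obtain ⟨v, w, hv, hw, rfl⟩ := exists_mul_eq_of_gcd ha hb u hu
  have h1 : v ∈ χ.toUnitHom.ker := hfb hv
  have h2 : w ∈ χ.toUnitHom.ker := hfa hw
  rw [MonoidHom.mem_ker] at h1 h2 ⊢
  rw [map_mul, h1, h2, one_mul]

lemma conductor_dvd_of_factorsThrough {d : ℕ} (hd : χ.FactorsThrough d) :
    χ.conductor ∣ d := by
  have hgcd : χ.FactorsThrough (Nat.gcd χ.conductor d) :=
    factorsThrough_gcd χ (factorsThrough_conductor χ) hd
  have h1 : χ.conductor ≤ Nat.gcd χ.conductor d := Nat.sInf_le hgcd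
  have hc0 : χ.conductor ≠ 0 := conductor_ne_zero χ
  have h2 : Nat.gcd χ.conductor d ≤ χ.conductor :=
    Nat.le_of_dvd (Nat.pos_of_ne_zero hc0) (Nat.gcd_dvd_left _ _)
  have : Nat.gcd χ.conductor d = χ.conductor := le_antisymm h2 h1
  rw [← this]
  exact Nat.gcd_dvd_right _ _

lemma factorsThrough_iff_conductor_dvd {d : ℕ} (hd : d ∣ q) :
    χ.FactorsThrough d ↔ χ.conductor ∣ d := by
  refine ⟨conductor_dvd_of_factorsThrough χ, fun h ↦ ?_⟩
  refine ⟨hd, changeLevel h (factorsThrough_conductor χ).χ₀, ?_⟩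
  rw [← changeLevel_trans _ h hd]
  have := (factorsThrough_conductor χ).eq_changeLevel
  convert this using 2

open scoped Classical in
lemma moebius_indicator :
    ∑ w ∈ q.divisors, (μ (q / w) : ℤ) * (if χ.FactorsThrough w then 1 else 0)
      = if χ.IsPrimitive then 1 else 0 := by
  have hq : q ≠ 0 := NeZero.ne q
  have hc : χ.conductor ∣ q := conductor_dvd_level χ
  have hc0 : χ.conductor ≠ 0 := conductor_ne_zero χ
  calc ∑ w ∈ q.divisors, (μ (q / w) : ℤ) * (if χ.FactorsThrough w then 1 else 0)
      = ∑ w ∈ q.divisors, (if χ.conductor ∣ w then μ (q / w) else 0) := by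
        refine Finset.sum_congr rfl fun w hw ↦ ?_
        rw [factorsThrough_iff_conductor_dvd χ (Nat.mem_divisors.mp hw).1]
        split_ifs <;> simp
    _ = ∑ w ∈ q.divisors.filter (χ.conductor ∣ ·), μ (q / w) := by
        rw [Finset.sum_filter]
    _ = ∑ u ∈ (q / χ.conductor).divisors, μ ((q / χ.conductor) / u) := by
        have hcpos : 0 < χ.conductor := Nat.pos_of_ne_zero hc0
        have hqc : 0 < q / χ.conductor :=
          Nat.div_pos (Nat.le_of_dvd (Nat.pos_of_ne_zero hq) hc) hcpos
        refine Finset.sum_nbij' (fun w ↦ w / χ.conductor) (fun u ↦ χ.conductor * u)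
          ?_ ?_ ?_ ?_ ?_
        · intro w hw
          simp only [Finset.mem_filter, Nat.mem_divisors] at hw
          obtain ⟨⟨hwq, -⟩, e, rfl⟩ := hw
          beta_reduce
          rw [Nat.mul_div_cancel_left _ hcpos]
          exact Nat.mem_divisors.mpr ⟨(Nat.dvd_div_iff_mul_dvd hc).mpr hwq, hqc.ne'⟩
        · intro u hu
          obtain ⟨huq, -⟩ := Nat.mem_divisors.mp hu
          refine Finset.mem_filter.mpr ⟨Nat.mem_divisors.mpr ⟨?_, hq⟩, Dvd.intro _ rfl⟩
          calc χ.conductor * u ∣ χ.conductor * (q / χ.conductor) :=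
                mul_dvd_mul_left _ huq
            _ = q := Nat.mul_div_cancel' hc
        · intro w hw
          simp only [Finset.mem_filter] at hw
          exact Nat.mul_div_cancel' hw.2
        · intro u hu
          exact Nat.mul_div_cancel_left _ hcpos
        · intro w hw
          simp only [Finset.mem_filter, Nat.mem_divisors] at hw
          obtain ⟨⟨hwq, -⟩, e, rfl⟩ := hw
          beta_reduce
          rw [Nat.mul_div_cancel_left _ hcpos]
          congr 1
          rw [Nat.div_div_eq_div_mul]
    _ = ∑ u ∈ (q / χ.conductor).divisors, μ u := Nat.sum_div_divisors _ _
    _ = if q / χ.conductor = 1 then 1 else 0 := by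
        have := ArithmeticFunction.coe_mul_zeta_apply (f := (μ : ArithmeticFunction ℤ))
          (x := q / χ.conductor)
        rw [ArithmeticFunction.moebius_mul_coe_zeta] at this
        rw [← this]
        simp [ArithmeticFunction.one_apply]
    _ = if χ.IsPrimitive then 1 else 0 := by
        congr 1
        rw [eq_iff_iff, isPrimitive_def]
        constructor
        · intro h
          have := Nat.mul_div_cancel' hc
          rw [h, mul_one] at this
          exact this.symm ▸ rfl
        · intro h
          rw [h]
          exact Nat.div_self (Nat.pos_of_ne_zero hq)

open scoped Classical in
lemma inner_char_sum {w : ℕ} (hw : w ∣ q) (m : ℤ) (hm : IsUnit ((m : ℤ) : ZMod q)) :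
    ∑ χ : DirichletCharacter ℂ q, (if χ.FactorsThrough w then χ ((m : ℤ) : ZMod q) else 0)
      = if ((m : ℤ) : ZMod w) = 1 then (Nat.totient w : ℂ) else 0 := by
  have hw0 : w ≠ 0 := fun h ↦ NeZero.ne q (Nat.eq_zero_of_zero_dvd (h ▸ hw))
  have : NeZero w := ⟨hw0⟩
  rw [← DirichletCharacter.sum_characters_eq ℂ ((m : ℤ) : ZMod w)]
  rw [← Finset.sum_filter]
  have himg : Finset.univ.filter (fun χ : DirichletCharacter ℂ q ↦ χ.FactorsThrough w)
      = Finset.univ.image (DirichletCharacter.changeLevel (R := ℂ) hw) := by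
    ext χ
    simp only [Finset.mem_filter, Finset.mem_univ, true_and, Finset.mem_image]
    constructor
    · rintro ⟨-, ψ, rfl⟩
      exact ⟨ψ, rfl⟩
    · rintro ⟨ψ, rfl⟩
      exact ⟨hw, ψ, rfl⟩
  rw [himg, Finset.sum_image (fun ψ _ ψ' _ h ↦ DirichletCharacter.changeLevel_injective hw h)]
  refine Finset.sum_congr rfl fun ψ _ ↦ ?_
  obtain ⟨u, hu⟩ := hm
  rw [← hu, DirichletCharacter.changeLevel_eq_cast_of_dvd ψ hw u]
  congr 1
  rw [hu]
  have : (ZMod.cast ((m : ℤ) : ZMod q) : ZMod w) = ZMod.castHom hw (ZMod w) ((m : ℤ) : ZMod q) :=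
    rfl
  rw [this, map_intCast]

open scoped Classical in
lemma primitive_char_sum (m : ℤ) (hm : IsUnit ((m : ℤ) : ZMod q)) :
    ∑ χ : DirichletCharacter ℂ q, (if χ.IsPrimitive then χ ((m : ℤ) : ZMod q) else 0)
      = ∑ w ∈ q.divisors,
          (if ((m : ℤ) : ZMod w) = 1 then (μ (q / w) : ℂ) * (Nat.totient w : ℂ) else 0) := by
  calc ∑ χ : DirichletCharacter ℂ q, (if χ.IsPrimitive then χ ((m : ℤ) : ZMod q) else 0)
      = ∑ χ : DirichletCharacter ℂ q, ∑ w ∈ q.divisors,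
          (μ (q / w) : ℂ) * (if χ.FactorsThrough w then χ ((m : ℤ) : ZMod q) else 0) := by
        refine Finset.sum_congr rfl fun χ _ ↦ ?_
        have h := moebius_indicator χ
        have h2 : ((∑ w ∈ q.divisors, (μ (q / w) : ℤ)
              * (if χ.FactorsThrough w then 1 else 0) : ℤ) : ℂ)
            = ((if χ.IsPrimitive then 1 else 0 : ℤ) : ℂ) := by
          exact congrArg (fun z : ℤ ↦ (z : ℂ)) h
        push_cast at h2
        calc (if χ.IsPrimitive then χ ((m : ℤ) : ZMod q) else 0)
            = (if χ.IsPrimitive then (1 : ℂ) else 0) * χ ((m : ℤ) : ZMod q) := by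
              split_ifs <;> simp
          _ = (∑ w ∈ q.divisors, (μ (q / w) : ℂ)
                * (if χ.FactorsThrough w then 1 else 0)) * χ ((m : ℤ) : ZMod q) := by
              rw [h2]
          _ = _ := by
              rw [Finset.sum_mul]
              refine Finset.sum_congr rfl fun w _ ↦ ?_
              split_ifs <;> ring
    _ = ∑ w ∈ q.divisors, (μ (q / w) : ℂ) * ∑ χ : DirichletCharacter ℂ q,
          (if χ.FactorsThrough w then χ ((m : ℤ) : ZMod q) else 0) := by
        rw [Finset.sum_comm]
        simp_rw [Finset.mul_sum]
    _ = _ := by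
        refine Finset.sum_congr rfl fun w hw ↦ ?_
        rw [inner_char_sum ((Nat.mem_divisors.mp hw).1) m hm]
        split_ifs <;> ring

end Aux

open scoped Classical in
/-- For `m` coprime to `q`, the sum of `χ(m)` over all odd primitive Dirichlet
characters mod `q` equals
`(1/2) Σ_{uw=q, m≡1 (w)} μ(u)φ(w) − (1/2) Σ_{uw=q, m≡−1 (w)} μ(u)φ(w)`. -/
theorem sum_odd_primitive_characters (q : ℕ) [NeZero q] (m : ℤ) (hm : IsCoprime m (q : ℤ)) :
    ∑ χ : DirichletCharacter ℂ q,
        (if χ.IsPrimitive ∧ χ.Odd then χ (m : ZMod q) else 0)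
    = (1 / 2 : ℂ) * (∑ w ∈ q.divisors,
          (if (m : ZMod w) = 1 then (μ (q / w) : ℂ) * (Nat.totient w : ℂ) else 0))
      - (1 / 2 : ℂ) * (∑ w ∈ q.divisors,
          (if (m : ZMod w) = -1 then (μ (q / w) : ℂ) * (Nat.totient w : ℂ) else 0)) := by
  have hm1 : IsUnit ((m : ℤ) : ZMod q) := by
    obtain ⟨u, v, huv⟩ := hm
    refine IsUnit.of_mul_eq_one ((u : ℤ) : ZMod q) ?_
    have := congrArg (fun z : ℤ ↦ (z : ZMod q)) huv
    push_cast at this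
    rw [ZMod.natCast_self, mul_zero, add_zero] at this
    rw [mul_comm] at this
    exact this
  have hm2 : IsUnit (((-m : ℤ)) : ZMod q) := by
    push_cast
    exact hm1.neg
  have hneg : ∀ w : ℕ, (((-m : ℤ)) : ZMod w) = -((m : ℤ) : ZMod w) := fun w ↦ by push_cast; ring
  have key : ∑ χ : DirichletCharacter ℂ q,
        (if χ.IsPrimitive ∧ χ.Odd then χ ((m : ℤ) : ZMod q) else 0)
      = (1 / 2 : ℂ) * ∑ χ : DirichletCharacter ℂ q,
          (if χ.IsPrimitive then χ ((m : ℤ) : ZMod q) else 0)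
        - (1 / 2 : ℂ) * ∑ χ : DirichletCharacter ℂ q,
          (if χ.IsPrimitive then χ (((-m : ℤ)) : ZMod q) else 0) := by
    rw [Finset.mul_sum, Finset.mul_sum, ← Finset.sum_sub_distrib]
    refine Finset.sum_congr rfl fun χ _ ↦ ?_
    rw [hneg q]
    by_cases hp : χ.IsPrimitive
    · rcases χ.even_or_odd with he | ho
      · have hno : ¬ χ.Odd := he.not_odd
        rw [he.eval_neg]
        simp [hp, hno]
      · rw [ho.eval_neg]
        simp [hp, ho]
        ring
    · simp [hp]
  rw [key, primitive_char_sum m hm1, primitive_char_sum (-m) hm2]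
  congr 2
  refine Finset.sum_congr rfl fun w _ ↦ ?_
  rw [hneg w]
  congr 1
  rw [eq_iff_iff, neg_eq_iff_eq_neg]
end

section
/- For complex numbers x, y with |Re(x)| < 1/2, |Re(y)| < 1/2 and Re(x+y) > 0, one has the identity Γ(x+y)Γ(1/2−y)/Γ(1/2+x) + Γ(x+y)Γ(1/2−x)/Γ(1/2+y) + Γ(1/2−x)Γ(1/2−y)/Γ(1−x−y) = π^{1/2} · Γ((x+y)/2) Γ((1/2−x)/2) Γ((1/2−y)/2) / (Γ((1−x−y)/2) Γ((1/2+x)/2) Γ((1/2+y)/2)). -/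
open Complex

lemma young_sin_pi_ne {s : ℂ} (h0 : 0 < s.re) (h1 : s.re < 1) :
    Complex.sin ((Real.pi : ℂ) * s) ≠ 0 := by
  rw [Complex.sin_ne_zero_iff]
  intro k hk
  have hπ : ((Real.pi : ℝ) : ℂ) ≠ 0 := by
    exact_mod_cast Real.pi_ne_zero
  have hs : s = (k : ℂ) := by
    apply mul_left_cancel₀ hπ
    rw [hk]; ring
  rw [hs] at h0 h1
  simp only [Complex.intCast_re] at h0 h1
  have h0' : (0 : ℤ) < k := by exact_mod_cast h0
  have h1' : k < (1 : ℤ) := by exact_mod_cast h1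
  omega

lemma young_refl {s : ℂ} (h0 : 0 < s.re) (h1 : s.re < 1) :
    Complex.Gamma s * Complex.Gamma (1 - s) * Complex.sin ((Real.pi : ℂ) * s)
      = (Real.pi : ℂ) := by
  rw [Complex.Gamma_mul_Gamma_one_sub, div_mul_cancel₀ _ (young_sin_pi_ne h0 h1)]

lemma young_trig (A B : ℂ) :
    Complex.cos (2*A) + Complex.cos (2*B) + Complex.sin (2*A + 2*B)
      = 4 * Complex.cos (A + B) * Complex.sin ((Real.pi : ℂ)/4 + A) *
          Complex.sin ((Real.pi : ℂ)/4 + B) := by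
  have h4s : Complex.sin ((Real.pi : ℂ)/4) = ((Real.sqrt 2 : ℝ) : ℂ)/2 := by
    rw [show ((Real.pi : ℝ) : ℂ)/4 = ((Real.pi/4 : ℝ) : ℂ) by push_cast; ring,
      ← Complex.ofReal_sin, Real.sin_pi_div_four]
    push_cast; ring
  have h4c : Complex.cos ((Real.pi : ℂ)/4) = ((Real.sqrt 2 : ℝ) : ℂ)/2 := by
    rw [show ((Real.pi : ℝ) : ℂ)/4 = ((Real.pi/4 : ℝ) : ℂ) by push_cast; ring,
      ← Complex.ofReal_cos, Real.cos_pi_div_four]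
    push_cast; ring
  have h2 : ((Real.sqrt 2 : ℝ) : ℂ)^2 = 2 := by
    rw [← Complex.ofReal_pow, Real.sq_sqrt (by norm_num : (2:ℝ) ≥ 0)]
    norm_num
  simp only [Complex.sin_add, Complex.cos_add, Complex.sin_two_mul, Complex.cos_two_mul,
    h4s, h4c]
  linear_combination (2 * Complex.sin B * (Complex.sin B + Complex.cos B)) *
      Complex.sin_sq_add_cos_sq A +
    (2 - 2 * Complex.cos A ^ 2 + 2 * Complex.sin A * Complex.cos A) *
      Complex.sin_sq_add_cos_sq B -
    ((Complex.cos A * Complex.cos B - Complex.sin A * Complex.sin B) *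
      (Complex.cos A + Complex.sin A) * (Complex.cos B + Complex.sin B)) * h2

set_option maxHeartbeats 1600000 in
/-- Young's gamma-function identity: for `|Re x| < 1/2`, `|Re y| < 1/2`, `Re(x+y) > 0`,
`Γ(x+y)Γ(1/2−y)/Γ(1/2+x) + Γ(x+y)Γ(1/2−x)/Γ(1/2+y) + Γ(1/2−x)Γ(1/2−y)/Γ(1−x−y)`
`= √π · Γ((x+y)/2) Γ((1/2−x)/2) Γ((1/2−y)/2) / (Γ((1−x−y)/2) Γ((1/2+x)/2) Γ((1/2+y)/2))`. -/
theorem gamma_identity_young (x y : ℂ) (hx : |x.re| < 1 / 2) (hy : |y.re| < 1 / 2)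
    (hxy : 0 < (x + y).re) :
    Complex.Gamma (x + y) * Complex.Gamma (1 / 2 - y) / Complex.Gamma (1 / 2 + x) +
      Complex.Gamma (x + y) * Complex.Gamma (1 / 2 - x) / Complex.Gamma (1 / 2 + y) +
      Complex.Gamma (1 / 2 - x) * Complex.Gamma (1 / 2 - y) / Complex.Gamma (1 - x - y)
    = (Real.sqrt Real.pi : ℂ) *
        Complex.Gamma ((x + y) / 2) * Complex.Gamma ((1 / 2 - x) / 2) *
          Complex.Gamma ((1 / 2 - y) / 2) /
        (Complex.Gamma ((1 - x - y) / 2) * Complex.Gamma ((1 / 2 + x) / 2) *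
          Complex.Gamma ((1 / 2 + y) / 2)) := by
  obtain ⟨hx1, hx2⟩ := abs_lt.mp hx
  obtain ⟨hy1, hy2⟩ := abs_lt.mp hy
  have hare : (x + y).re = x.re + y.re := by simp
  rw [hare] at hxy
  have hπ : ((Real.pi : ℝ) : ℂ) ≠ 0 := by exact_mod_cast Real.pi_ne_zero
  -- real part computations
  have hre1 : ((1/2 + x : ℂ)).re = 1/2 + x.re := by simp
  have hre2 : ((1/2 + y : ℂ)).re = 1/2 + y.re := by simp
  have hre3 : ((1 - x - y : ℂ)).re = 1 - x.re - y.re := by simp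
  have hre4 : (((1 - x - y)/2 : ℂ)).re = (1 - x.re - y.re)/2 := by simp [Complex.div_re]
  have hre5 : (((1/2 + x)/2 : ℂ)).re = (1/2 + x.re)/2 := by simp [Complex.div_re]
  have hre6 : (((1/2 + y)/2 : ℂ)).re = (1/2 + y.re)/2 := by simp [Complex.div_re]
  have hre7 : (((x + y)/2 + 1/2 : ℂ)).re = (x.re + y.re)/2 + 1/2 := by
    simp [Complex.div_re]
  have hre8 : (((1/2 - x)/2 + 1/2 : ℂ)).re = (1/2 - x.re)/2 + 1/2 := by
    simp [Complex.div_re]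
  have hre9 : (((1/2 - y)/2 + 1/2 : ℂ)).re = (1/2 - y.re)/2 + 1/2 := by
    simp [Complex.div_re]
  -- nonvanishing of the Gamma factors in denominators
  have hGx : Complex.Gamma (1/2 + x) ≠ 0 :=
    Complex.Gamma_ne_zero_of_re_pos (by rw [hre1]; linarith)
  have hGy : Complex.Gamma (1/2 + y) ≠ 0 :=
    Complex.Gamma_ne_zero_of_re_pos (by rw [hre2]; linarith)
  have hGxy : Complex.Gamma (1 - x - y) ≠ 0 :=
    Complex.Gamma_ne_zero_of_re_pos (by rw [hre3]; linarith)
  have hGd1 : Complex.Gamma ((1 - x - y)/2) ≠ 0 :=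
    Complex.Gamma_ne_zero_of_re_pos (by rw [hre4]; linarith)
  have hGd2 : Complex.Gamma ((1/2 + x)/2) ≠ 0 :=
    Complex.Gamma_ne_zero_of_re_pos (by rw [hre5]; linarith)
  have hGd3 : Complex.Gamma ((1/2 + y)/2) ≠ 0 :=
    Complex.Gamma_ne_zero_of_re_pos (by rw [hre6]; linarith)
  have hPa : Complex.Gamma ((x + y)/2 + 1/2) ≠ 0 :=
    Complex.Gamma_ne_zero_of_re_pos (by rw [hre7]; linarith)
  have hPx : Complex.Gamma ((1/2 - x)/2 + 1/2) ≠ 0 :=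
    Complex.Gamma_ne_zero_of_re_pos (by rw [hre8]; linarith)
  have hPy : Complex.Gamma ((1/2 - y)/2 + 1/2) ≠ 0 :=
    Complex.Gamma_ne_zero_of_re_pos (by rw [hre9]; linarith)
  -- reflection identities
  have R1 : Complex.Gamma (1/2 + x) * Complex.Gamma (1/2 - x) *
      Complex.sin ((Real.pi : ℂ) * (1/2 + x)) = (Real.pi : ℂ) := by
    have h := young_refl (s := 1/2 + x) (by rw [hre1]; linarith) (by rw [hre1]; linarith)
    rwa [show (1 : ℂ) - (1/2 + x) = 1/2 - x by ring] at h
  have R2 : Complex.Gamma (1/2 + y) * Complex.Gamma (1/2 - y) *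
      Complex.sin ((Real.pi : ℂ) * (1/2 + y)) = (Real.pi : ℂ) := by
    have h := young_refl (s := 1/2 + y) (by rw [hre2]; linarith) (by rw [hre2]; linarith)
    rwa [show (1 : ℂ) - (1/2 + y) = 1/2 - y by ring] at h
  have R3 : Complex.Gamma (x + y) * Complex.Gamma (1 - x - y) *
      Complex.sin ((Real.pi : ℂ) * (x + y)) = (Real.pi : ℂ) := by
    have h := young_refl (s := x + y) (by rw [hare]; linarith) (by rw [hare]; linarith)
    rwa [show (1 : ℂ) - (x + y) = 1 - x - y by ring] at h
  have R4 : Complex.Gamma ((1 - x - y)/2) * Complex.Gamma ((x + y)/2 + 1/2) *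
      Complex.sin ((Real.pi : ℂ) * ((1 - x - y)/2)) = (Real.pi : ℂ) := by
    have h := young_refl (s := (1 - x - y)/2) (by rw [hre4]; linarith) (by rw [hre4]; linarith)
    rwa [show (1 : ℂ) - (1 - x - y)/2 = (x + y)/2 + 1/2 by ring] at h
  have R5 : Complex.Gamma ((1/2 + x)/2) * Complex.Gamma ((1/2 - x)/2 + 1/2) *
      Complex.sin ((Real.pi : ℂ) * ((1/2 + x)/2)) = (Real.pi : ℂ) := by
    have h := young_refl (s := (1/2 + x)/2) (by rw [hre5]; linarith) (by rw [hre5]; linarith)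
    rwa [show (1 : ℂ) - (1/2 + x)/2 = (1/2 - x)/2 + 1/2 by ring] at h
  have R6 : Complex.Gamma ((1/2 + y)/2) * Complex.Gamma ((1/2 - y)/2 + 1/2) *
      Complex.sin ((Real.pi : ℂ) * ((1/2 + y)/2)) = (Real.pi : ℂ) := by
    have h := young_refl (s := (1/2 + y)/2) (by rw [hre6]; linarith) (by rw [hre6]; linarith)
    rwa [show (1 : ℂ) - (1/2 + y)/2 = (1/2 - y)/2 + 1/2 by ring] at h
  -- duplication identities
  have D1 : Complex.Gamma ((x + y)/2) * Complex.Gamma ((x + y)/2 + 1/2) =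
      Complex.Gamma (x + y) * (2 : ℂ) ^ ((1 : ℂ) - (x + y)) * ((Real.sqrt Real.pi : ℝ) : ℂ) := by
    have h := Complex.Gamma_mul_Gamma_add_half ((x + y)/2)
    rwa [show 2 * ((x + y)/2) = x + y by ring] at h
  have D2 : Complex.Gamma ((1/2 - x)/2) * Complex.Gamma ((1/2 - x)/2 + 1/2) =
      Complex.Gamma (1/2 - x) * (2 : ℂ) ^ ((1 : ℂ) - (1/2 - x)) *
        ((Real.sqrt Real.pi : ℝ) : ℂ) := by
    have h := Complex.Gamma_mul_Gamma_add_half ((1/2 - x)/2)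
    rwa [show 2 * ((1/2 - x)/2) = 1/2 - x by ring] at h
  have D3 : Complex.Gamma ((1/2 - y)/2) * Complex.Gamma ((1/2 - y)/2 + 1/2) =
      Complex.Gamma (1/2 - y) * (2 : ℂ) ^ ((1 : ℂ) - (1/2 - y)) *
        ((Real.sqrt Real.pi : ℝ) : ℂ) := by
    have h := Complex.Gamma_mul_Gamma_add_half ((1/2 - y)/2)
    rwa [show 2 * ((1/2 - y)/2) = 1/2 - y by ring] at h
  -- power and sqrt facts
  have hpow : (2 : ℂ) ^ ((1 : ℂ) - (x + y)) * (2 : ℂ) ^ ((1 : ℂ) - (1/2 - x)) *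
      (2 : ℂ) ^ ((1 : ℂ) - (1/2 - y)) = 4 := by
    rw [← Complex.cpow_add _ _ two_ne_zero, ← Complex.cpow_add _ _ two_ne_zero,
      show (1 : ℂ) - (x + y) + ((1 : ℂ) - (1/2 - x)) + ((1 : ℂ) - (1/2 - y)) = 2 by ring]
    norm_num [Complex.cpow_natCast]
  have hsq : ((Real.sqrt Real.pi : ℝ) : ℂ) * ((Real.sqrt Real.pi : ℝ) : ℂ)
      = ((Real.pi : ℝ) : ℂ) := by
    rw [← Complex.ofReal_mul, Real.mul_self_sqrt Real.pi_pos.le]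
  -- trig identity in the needed form
  have trig : Complex.sin ((Real.pi : ℂ) * (1/2 + x)) + Complex.sin ((Real.pi : ℂ) * (1/2 + y)) +
      Complex.sin ((Real.pi : ℂ) * (x + y)) =
      4 * Complex.sin ((Real.pi : ℂ) * ((1 - x - y)/2)) *
        Complex.sin ((Real.pi : ℂ) * ((1/2 + x)/2)) *
        Complex.sin ((Real.pi : ℂ) * ((1/2 + y)/2)) := by
    have hc : ∀ z : ℂ, Complex.sin ((Real.pi : ℂ)/2 + z) = Complex.cos z := by
      intro z
      rw [Complex.sin_add, Complex.sin_pi_div_two, Complex.cos_pi_div_two]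
      ring
    have hc' : ∀ z : ℂ, Complex.sin ((Real.pi : ℂ)/2 - z) = Complex.cos z := by
      intro z
      rw [Complex.sin_sub, Complex.sin_pi_div_two, Complex.cos_pi_div_two]
      ring
    have h := young_trig ((Real.pi : ℂ) * x / 2) ((Real.pi : ℂ) * y / 2)
    rw [show (Real.pi : ℂ) * (1/2 + x) = (Real.pi : ℂ)/2 + (Real.pi : ℂ) * x by ring,
      show (Real.pi : ℂ) * (1/2 + y) = (Real.pi : ℂ)/2 + (Real.pi : ℂ) * y by ring,
      hc, hc,
      show (Real.pi : ℂ) * ((1 - x - y)/2) =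
        (Real.pi : ℂ)/2 - ((Real.pi : ℂ) * x / 2 + (Real.pi : ℂ) * y / 2) by ring,
      hc',
      show (Real.pi : ℂ) * ((1/2 + x)/2) = (Real.pi : ℂ)/4 + (Real.pi : ℂ) * x / 2 by ring,
      show (Real.pi : ℂ) * ((1/2 + y)/2) = (Real.pi : ℂ)/4 + (Real.pi : ℂ) * y / 2 by ring]
    rw [show 2 * ((Real.pi : ℂ) * x / 2) + 2 * ((Real.pi : ℂ) * y / 2)
        = (Real.pi : ℂ) * (x + y) by ring,
      show 2 * ((Real.pi : ℂ) * x / 2) = (Real.pi : ℂ) * x by ring,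
      show 2 * ((Real.pi : ℂ) * y / 2) = (Real.pi : ℂ) * y by ring] at h
    exact h
  -- rewrite each left-hand term
  have key1 : Complex.Gamma (x + y) * Complex.Gamma (1/2 - y) / Complex.Gamma (1/2 + x) =
      Complex.Gamma (x + y) * Complex.Gamma (1/2 - x) * Complex.Gamma (1/2 - y) *
        Complex.sin ((Real.pi : ℂ) * (1/2 + x)) / (Real.pi : ℂ) := by
    rw [div_eq_div_iff hGx hπ]
    linear_combination (-(Complex.Gamma (x + y) * Complex.Gamma (1/2 - y))) * R1
  have key2 : Complex.Gamma (x + y) * Complex.Gamma (1/2 - x) / Complex.Gamma (1/2 + y) =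
      Complex.Gamma (x + y) * Complex.Gamma (1/2 - x) * Complex.Gamma (1/2 - y) *
        Complex.sin ((Real.pi : ℂ) * (1/2 + y)) / (Real.pi : ℂ) := by
    rw [div_eq_div_iff hGy hπ]
    linear_combination (-(Complex.Gamma (x + y) * Complex.Gamma (1/2 - x))) * R2
  have key3 : Complex.Gamma (1/2 - x) * Complex.Gamma (1/2 - y) / Complex.Gamma (1 - x - y) =
      Complex.Gamma (x + y) * Complex.Gamma (1/2 - x) * Complex.Gamma (1/2 - y) *
        Complex.sin ((Real.pi : ℂ) * (x + y)) / (Real.pi : ℂ) := by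
    rw [div_eq_div_iff hGxy hπ]
    linear_combination (-(Complex.Gamma (1/2 - x) * Complex.Gamma (1/2 - y))) * R3
  -- rewrite the right-hand side
  have keyR : (Real.sqrt Real.pi : ℂ) *
        Complex.Gamma ((x + y) / 2) * Complex.Gamma ((1 / 2 - x) / 2) *
          Complex.Gamma ((1 / 2 - y) / 2) /
        (Complex.Gamma ((1 - x - y) / 2) * Complex.Gamma ((1 / 2 + x) / 2) *
          Complex.Gamma ((1 / 2 + y) / 2)) =
      Complex.Gamma (x + y) * Complex.Gamma (1/2 - x) * Complex.Gamma (1/2 - y) *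
        (4 * Complex.sin ((Real.pi : ℂ) * ((1 - x - y)/2)) *
          Complex.sin ((Real.pi : ℂ) * ((1/2 + x)/2)) *
          Complex.sin ((Real.pi : ℂ) * ((1/2 + y)/2))) / (Real.pi : ℂ) := by
    rw [div_eq_div_iff (mul_ne_zero (mul_ne_zero hGd1 hGd2) hGd3) hπ]
    refine mul_right_cancel₀ (mul_ne_zero (mul_ne_zero hPa hPx) hPy) ?_
    linear_combination
      (((Real.sqrt Real.pi : ℝ) : ℂ) * (Real.pi : ℂ) *
        (Complex.Gamma ((1/2 - x)/2) * Complex.Gamma ((1/2 - x)/2 + 1/2)) *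
        (Complex.Gamma ((1/2 - y)/2) * Complex.Gamma ((1/2 - y)/2 + 1/2))) * D1 +
      (((Real.sqrt Real.pi : ℝ) : ℂ) * (Real.pi : ℂ) *
        (Complex.Gamma (x + y) * (2 : ℂ) ^ ((1 : ℂ) - (x + y)) *
          ((Real.sqrt Real.pi : ℝ) : ℂ)) *
        (Complex.Gamma ((1/2 - y)/2) * Complex.Gamma ((1/2 - y)/2 + 1/2))) * D2 +
      (((Real.sqrt Real.pi : ℝ) : ℂ) * (Real.pi : ℂ) *
        (Complex.Gamma (x + y) * (2 : ℂ) ^ ((1 : ℂ) - (x + y)) *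
          ((Real.sqrt Real.pi : ℝ) : ℂ)) *
        (Complex.Gamma (1/2 - x) * (2 : ℂ) ^ ((1 : ℂ) - (1/2 - x)) *
          ((Real.sqrt Real.pi : ℝ) : ℂ))) * D3 +
      ((Real.pi : ℂ) * ((Real.sqrt Real.pi : ℝ) : ℂ)^4 *
        (Complex.Gamma (x + y) * Complex.Gamma (1/2 - x) * Complex.Gamma (1/2 - y))) * hpow +
      (4 * (Real.pi : ℂ) *
        (Complex.Gamma (x + y) * Complex.Gamma (1/2 - x) * Complex.Gamma (1/2 - y)) *
        (((Real.sqrt Real.pi : ℝ) : ℂ) * ((Real.sqrt Real.pi : ℝ) : ℂ) + (Real.pi : ℂ))) * hsq -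
      (4 * (Complex.Gamma (x + y) * Complex.Gamma (1/2 - x) * Complex.Gamma (1/2 - y)) *
        (Complex.Gamma ((1/2 + x)/2) * Complex.Gamma ((1/2 - x)/2 + 1/2) *
          Complex.sin ((Real.pi : ℂ) * ((1/2 + x)/2))) *
        (Complex.Gamma ((1/2 + y)/2) * Complex.Gamma ((1/2 - y)/2 + 1/2) *
          Complex.sin ((Real.pi : ℂ) * ((1/2 + y)/2)))) * R4 -
      (4 * (Complex.Gamma (x + y) * Complex.Gamma (1/2 - x) * Complex.Gamma (1/2 - y)) *
        (Real.pi : ℂ) *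
        (Complex.Gamma ((1/2 + y)/2) * Complex.Gamma ((1/2 - y)/2 + 1/2) *
          Complex.sin ((Real.pi : ℂ) * ((1/2 + y)/2)))) * R5 -
      (4 * (Complex.Gamma (x + y) * Complex.Gamma (1/2 - x) * Complex.Gamma (1/2 - y)) *
        (Real.pi : ℂ) * (Real.pi : ℂ)) * R6
  rw [key1, key2, key3, keyR]
  rw [← add_div, ← add_div]
  congr 1
  linear_combination (Complex.Gamma (x + y) * Complex.Gamma (1/2 - x) *
    Complex.Gamma (1/2 - y)) * trig
end

section
/- Let σ > 1/2 with σ close to 1/2, q a positive integer, and x > 1. Then Σ_{n ≤ x, (n,q)=1} μ(n)²/φ_{2σ}(n) = L(2σ, χ_{0,q}) · (1 + O(x^{1−2σ})), where φ_{2σ}(n) = n^{2σ} Π_{p|n}(1 − p^{−2σ}) and χ_{0,q} is the principal character mod q. -/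
open ArithmeticFunction Finset
open scoped ArithmeticFunction.Moebius

namespace SumMoebiusAux

open Set
open scoped ENNReal NNReal

noncomputable def ee (r : ℝ) (m : ℕ) : ℝ≥0∞ := ENNReal.ofReal ((m : ℝ) ^ (-r))

lemma ee_mul (r : ℝ) (a b : ℕ) : ee r (a * b) = ee r a * ee r b := by
  unfold ee
  rw [← ENNReal.ofReal_mul (Real.rpow_nonneg (Nat.cast_nonneg a) _)]
  congr 1
  push_cast
  exact Real.mul_rpow (Nat.cast_nonneg a) (Nat.cast_nonneg b)

lemma ee_zero {r : ℝ} (hr : 0 < r) : ee r 0 = 0 := by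
  simp [ee, Real.zero_rpow (by linarith : -r ≠ 0)]

lemma ee_one (r : ℝ) : ee r 1 = 1 := by simp [ee]

lemma summable_rpow {r : ℝ} (hr : 1 < r) : Summable (fun m : ℕ => (m : ℝ) ^ (-r)) :=
  Real.summable_nat_rpow.mpr (by linarith)

lemma ofReal_tsum_subtype {r : ℝ} (hr : 1 < r) (A : Set ℕ) :
    ENNReal.ofReal (∑' m : A, ((m : ℕ) : ℝ) ^ (-r)) = ∑' m, A.indicator (ee r) m := by
  rw [ENNReal.ofReal_tsum_of_nonneg (f := fun m : A => ((m : ℕ) : ℝ) ^ (-r)) (fun _ => Real.rpow_nonneg (Nat.cast_nonneg _) _)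
    ((summable_rpow hr).subtype A), ← tsum_subtype A (ee r)]
  rfl

lemma tsum_le_tsum_inj {α β : Type*} (f : α → ℝ≥0∞) (g : β → ℝ≥0∞) (A : Set α)
    (hA : ∀ a, a ∉ A → f a = 0) (i : α → β) (hi : A.InjOn i)
    (hle : ∀ a ∈ A, f a ≤ g (i a)) : ∑' a, f a ≤ ∑' b, g b := by
  have hsupp : Function.support f ⊆ A := by
    intro a ha
    by_contra h
    exact ha (hA a h)
  calc ∑' a, f a = ∑' a : A, f (a : α) := (tsum_subtype_eq_of_support_subset hsupp).symm
    _ ≤ ∑' a : A, g (i (a : α)) := ENNReal.tsum_le_tsum fun a => hle a a.2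
    _ ≤ ∑' b, g b :=
        ENNReal.tsum_comp_le_tsum_of_injective
          (fun a b hab => Subtype.ext (hi a.2 b.2 hab)) g

lemma tsum_mul_tsum (f g : ℕ → ℝ≥0∞) :
    (∑' a, f a) * ∑' b, g b = ∑' p : ℕ × ℕ, f p.1 * g p.2 := by
  rw [ENNReal.tsum_prod']
  simp_rw [ENNReal.tsum_mul_left]
  rw [ENNReal.tsum_mul_right]

lemma factorization_prod_pow (t : Finset ℕ) (ht : ∀ p ∈ t, p.Prime) (g : ℕ → ℕ) (rp : ℕ) :
    (∏ p ∈ t, p ^ g p).factorization rp = if rp ∈ t then g rp else 0 := by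
  rw [Nat.factorization_prod (fun p hp => pow_ne_zero _ (ht p hp).ne_zero)]
  rw [Finset.sum_apply']
  rw [Finset.sum_congr rfl (fun p hp => by rw [(ht p hp).factorization_pow])]
  simp [Finsupp.single_apply]

def sp (q m : ℕ) : ℕ := ∏ p ∈ q.primeFactors, p ^ m.factorization p

variable {q m : ℕ}

lemma sp_ne_zero : sp q m ≠ 0 :=
  Finset.prod_ne_zero_iff.mpr fun p hp => pow_ne_zero _ (Nat.prime_of_mem_primeFactors hp).ne_zero

lemma sp_factorization (rp : ℕ) :
    (sp q m).factorization rp = if rp ∈ q.primeFactors then m.factorization rp else 0 :=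
  factorization_prod_pow _ (fun _ hp => Nat.prime_of_mem_primeFactors hp) _ _

lemma sp_dvd (hm : m ≠ 0) : sp q m ∣ m := by
  rw [← Nat.factorization_le_iff_dvd sp_ne_zero hm]
  refine Finsupp.le_def.mpr fun rp => ?_
  rw [sp_factorization]
  split <;> simp

lemma sp_factored : sp q m ∈ Nat.factoredNumbers q.primeFactors := by
  rw [Nat.mem_factoredNumbers_iff_primeFactors_subset]
  refine ⟨sp_ne_zero, fun p hp => ?_⟩
  rw [← Nat.support_factorization] at hp
  have h := Finsupp.mem_support_iff.mp hp
  rw [sp_factorization] at h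
  by_contra hc
  simp [hc] at h

lemma sp_div_pos (hm : m ≠ 0) : 0 < m / sp q m :=
  Nat.div_pos (Nat.le_of_dvd (Nat.pos_of_ne_zero hm) (sp_dvd hm)) (Nat.pos_of_ne_zero sp_ne_zero)

lemma sp_mul_div (hm : m ≠ 0) : sp q m * (m / sp q m) = m := Nat.mul_div_cancel' (sp_dvd hm)

lemma coprime_div_sp (hm : m ≠ 0) (hq : q ≠ 0) : (m / sp q m).Coprime q := by
  have hne : m / sp q m ≠ 0 := (sp_div_pos hm).ne'
  rw [← Nat.disjoint_primeFactors hne hq, Finset.disjoint_left]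
  intro p hp hpq
  have h1 : (m / sp q m).factorization p = m.factorization p - (sp q m).factorization p := by
    rw [Nat.factorization_div (sp_dvd hm), Finsupp.tsub_apply]
  rw [sp_factorization, if_pos hpq] at h1
  have h2 : (m / sp q m).factorization p ≠ 0 := by
    rw [← Nat.support_factorization] at hp
    exact Finsupp.mem_support_iff.mp hp
  omega

def rad (m : ℕ) : ℕ := ∏ p ∈ m.primeFactors, p

lemma rad_dvd : rad m ∣ m := Nat.prod_primeFactors_dvd m

lemma rad_ne_zero : rad m ≠ 0 :=
  Finset.prod_ne_zero_iff.mpr fun p hp => (Nat.prime_of_mem_primeFactors hp).ne_zero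

lemma rad_squarefree : Squarefree (rad m) := by
  rw [Nat.squarefree_iff_factorization_le_one rad_ne_zero]
  intro p
  have h : rad m = ∏ p ∈ m.primeFactors, p ^ (1 : ℕ) := by simp [rad]
  rw [h, factorization_prod_pow _ (fun _ hp => Nat.prime_of_mem_primeFactors hp)]
  split <;> simp

lemma rad_primeFactors : (rad m).primeFactors = m.primeFactors :=
  Nat.primeFactors_prod fun _ hp => Nat.prime_of_mem_primeFactors hp

lemma coprime_of_factored {d m' : ℕ} (hd : d ∈ Nat.factoredNumbers q.primeFactors)
    (hm' : m'.Coprime q) (hm'0 : m' ≠ 0) (hq : q ≠ 0) : d.Coprime m' := by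
  obtain ⟨hd0, hsub⟩ := Nat.mem_factoredNumbers_iff_primeFactors_subset.mp hd
  rw [← Nat.disjoint_primeFactors hd0 hm'0]
  exact (hm'.symm.disjoint_primeFactors).mono_left hsub

lemma factored_unique {d₁ d₂ m₁ m₂ : ℕ} (hq : q ≠ 0)
    (hd₁ : d₁ ∈ Nat.factoredNumbers q.primeFactors) (hd₂ : d₂ ∈ Nat.factoredNumbers q.primeFactors)
    (hm₁ : m₁.Coprime q) (hm₂ : m₂.Coprime q) (hm₁0 : m₁ ≠ 0) (hm₂0 : m₂ ≠ 0)
    (h : d₁ * m₁ = d₂ * m₂) : d₁ = d₂ ∧ m₁ = m₂ := by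
  have c1 : d₁.Coprime m₂ := coprime_of_factored hd₁ hm₂ hm₂0 hq
  have c2 : d₂.Coprime m₁ := coprime_of_factored hd₂ hm₁ hm₁0 hq
  have hdd : d₁ = d₂ := by
    refine Nat.dvd_antisymm ?_ ?_
    · exact c1.dvd_of_dvd_mul_right (h ▸ Dvd.intro m₁ rfl)
    · exact c2.dvd_of_dvd_mul_right (h.symm ▸ Dvd.intro m₂ rfl)
  subst hdd
  have hd0 : d₁ ≠ 0 := Nat.ne_zero_of_mem_factoredNumbers hd₁
  exact ⟨rfl, Nat.eq_of_mul_eq_mul_left (Nat.pos_of_ne_zero hd0) h⟩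

lemma euler_prod {r : ℝ} (hr : 1 < r) (t : Finset ℕ) (ht : ∀ p ∈ t, p.Prime) :
    ∏ p ∈ t, (1 - (p : ℝ) ^ (-r))⁻¹ = ∑' m : Nat.factoredNumbers t, ((m : ℕ) : ℝ) ^ (-r) := by
  let f : ℕ →* ℝ :=
    { toFun := fun n => (n : ℝ) ^ (-r)
      map_one' := by simp
      map_mul' := fun a b => by
        push_cast
        exact Real.mul_rpow (Nat.cast_nonneg a) (Nat.cast_nonneg b) }
  have hsum : Summable f := summable_rpow hr
  have h := EulerProduct.prod_filter_prime_geometric_eq_tsum_factoredNumbers (f := f) hsum t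
  rwa [Finset.filter_true_of_mem ht] at h

variable {r : ℝ} {q N : ℕ}

def copSet (q : ℕ) : Set ℕ := {m | 0 < m ∧ Nat.Coprime m q}

noncomputable def LL (r : ℝ) (q : ℕ) : ℝ≥0∞ := ∑' m, (copSet q).indicator (ee r) m
noncomputable def PP (r : ℝ) (q N : ℕ) : ℝ≥0∞ :=
  ∑' m, ((copSet q) ∩ {m | m ≤ N}).indicator (ee r) m
noncomputable def TT (r : ℝ) (q N : ℕ) : ℝ≥0∞ :=
  ∑' m, ((copSet q) ∩ {m | N < m}).indicator (ee r) m
noncomputable def DD (r : ℝ) (q : ℕ) : ℝ≥0∞ :=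
  ∑' d, (Nat.factoredNumbers q.primeFactors).indicator (ee r) d
noncomputable def Zfull (r : ℝ) : ℝ≥0∞ := ∑' m, ee r m
noncomputable def Ztail (r : ℝ) (N : ℕ) : ℝ≥0∞ :=
  ∑' m, ({m | N < m} : Set ℕ).indicator (ee r) m

variable {r : ℝ} {q N : ℕ}

lemma LL_split : LL r q ≤ PP r q N + TT r q N := by
  rw [PP, TT, ← ENNReal.tsum_add]
  refine ENNReal.tsum_le_tsum fun m => ?_
  by_cases hc : m ∈ copSet q
  · by_cases hm : m ≤ N
    · rw [indicator_of_mem hc, indicator_of_mem (Set.mem_inter hc (show m ∈ {m : ℕ | m ≤ N} from hm))]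
      exact le_self_add
    · rw [indicator_of_mem hc,
        indicator_of_mem (Set.mem_inter hc (show m ∈ {m : ℕ | N < m} from lt_of_not_ge hm))]
      exact le_add_self
  · rw [indicator_of_notMem hc, indicator_of_notMem (fun h => hc h.1),
      indicator_of_notMem (fun h => hc h.1)]
    simp

lemma Zfull_eq (hr : 1 < r) :
    Zfull r = ENNReal.ofReal (∑' m : ℕ, (m : ℝ) ^ (-r)) :=
  (ENNReal.ofReal_tsum_of_nonneg (fun _ => Real.rpow_nonneg (Nat.cast_nonneg _) _)
    (summable_rpow hr)).symm

lemma Zfull_ne_top (hr : 1 < r) : Zfull r ≠ ⊤ := by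
  rw [Zfull_eq hr]; exact ENNReal.ofReal_ne_top

lemma DD_le_Zfull : DD r q ≤ Zfull r :=
  ENNReal.tsum_le_tsum fun d => Set.indicator_le_self _ _ d

lemma one_le_DD : 1 ≤ DD r q := by
  have h1 : (1 : ℕ) ∈ Nat.factoredNumbers q.primeFactors := ⟨one_ne_zero, by simp⟩
  calc (1 : ℝ≥0∞) = (Nat.factoredNumbers q.primeFactors).indicator (ee r) 1 := by
        rw [indicator_of_mem h1, ee_one]
    _ ≤ DD r q := ENNReal.le_tsum 1

lemma DD_mul_TT_le (hr : 1 < r) (hq : 0 < q) : DD r q * TT r q N ≤ Ztail r N := by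
  rw [DD, TT, tsum_mul_tsum]
  refine tsum_le_tsum_inj _ _
    {p : ℕ × ℕ | p.1 ∈ Nat.factoredNumbers q.primeFactors ∧ p.2 ∈ copSet q ∧ N < p.2}
    ?_ (fun p => p.1 * p.2) ?_ ?_
  · intro p hp
    by_cases h1 : p.1 ∈ Nat.factoredNumbers q.primeFactors
    · have h2 : p.2 ∉ copSet q ∩ {m | N < m} := fun h => hp ⟨h1, h.1, h.2⟩
      rw [indicator_of_notMem h2, mul_zero]
    · rw [indicator_of_notMem h1, zero_mul]
  · rintro ⟨d₁, m₁⟩ ⟨hd₁, hm₁, hN₁⟩ ⟨d₂, m₂⟩ ⟨hd₂, hm₂, hN₂⟩ h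
    have := factored_unique hq.ne' hd₁ hd₂ hm₁.2 hm₂.2 hm₁.1.ne' hm₂.1.ne' h
    exact Prod.ext this.1 this.2
  · rintro ⟨d, m⟩ ⟨hd, hm, hNm⟩
    have hd0 : 0 < d := Nat.pos_of_ne_zero (Nat.ne_zero_of_mem_factoredNumbers hd)
    have hdm : d * m ∈ {m : ℕ | N < m} := by
      show N < d * m
      calc N < m := hNm
        _ = 1 * m := (one_mul m).symm
        _ ≤ d * m := Nat.mul_le_mul_right m hd0
    rw [indicator_of_mem hd,
      indicator_of_mem (Set.mem_inter hm (show m ∈ {m : ℕ | N < m} from hNm)), ← ee_mul,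
      indicator_of_mem hdm]

lemma coef_eq (hr : 1 < r) (hN : 1 ≤ N) :
    (N : ℝ≥0∞) * ee r N = ENNReal.ofReal ((N : ℝ) ^ (1 - r)) := by
  have hN0 : (0 : ℝ) < N := by exact_mod_cast hN
  rw [ee, ← ENNReal.ofReal_natCast, ← ENNReal.ofReal_mul (Nat.cast_nonneg N)]
  congr 1
  rw [sub_eq_add_neg, Real.rpow_add hN0, Real.rpow_one]

lemma Ztail_le (hr : 1 < r) (hN : 1 ≤ N) :
    Ztail r N ≤ ENNReal.ofReal ((N : ℝ) ^ (1 - r)) * Zfull r := by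
  have hN0 : 0 < N := hN
  have step1 : Ztail r N ≤
      (∑' k, ({k | 0 < k} : Set ℕ).indicator (fun k => ee r (N * k)) k) *
        ∑' j, ({j | j < N} : Set ℕ).indicator (fun _ => (1 : ℝ≥0∞)) j := by
    rw [tsum_mul_tsum, Ztail]
    refine tsum_le_tsum_inj _ _ {m | N < m} (fun a ha => indicator_of_notMem ha _)
      (fun m => (m / N, m % N)) ?_ ?_
    · intro a _ b _ h
      rw [Prod.mk.injEq] at h
      calc a = N * (a / N) + a % N := (Nat.div_add_mod a N).symm
        _ = N * (b / N) + b % N := by rw [h.1, h.2]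
        _ = b := Nat.div_add_mod b N
    · intro m hm
      have hm' : N < m := hm
      have h1 : 0 < m / N := Nat.div_pos hm'.le hN0
      have h2 : m % N < N := Nat.mod_lt _ hN0
      rw [indicator_of_mem hm,
        indicator_of_mem (show m / N ∈ {k : ℕ | 0 < k} from h1),
        indicator_of_mem (show m % N ∈ {j : ℕ | j < N} from h2), mul_one]
      unfold ee
      refine ENNReal.ofReal_le_ofReal (Real.rpow_le_rpow_of_nonpos ?_ ?_ (by linarith))
      · have : 1 ≤ N * (m / N) := Nat.one_le_iff_ne_zero.mpr (by positivity)
        exact_mod_cast this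
      · exact_mod_cast Nat.mul_div_le m N
  have count : (∑' j, ({j | j < N} : Set ℕ).indicator (fun _ => (1 : ℝ≥0∞)) j) = N := by
    rw [tsum_eq_sum (s := Finset.range N)
      (fun j hj => indicator_of_notMem (by simpa using hj) _)]
    rw [Finset.sum_congr rfl fun j hj =>
      indicator_of_mem (show j ∈ {j : ℕ | j < N} by simpa using hj) (fun _ => (1 : ℝ≥0∞))]
    simp
  have left : (∑' k, ({k | 0 < k} : Set ℕ).indicator (fun k => ee r (N * k)) k)
      ≤ ee r N * Zfull r := by
    have : ∀ k, ({k | 0 < k} : Set ℕ).indicator (fun k => ee r (N * k)) k ≤ ee r N * ee r k := by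
      intro k
      by_cases hk : k ∈ ({k | 0 < k} : Set ℕ)
      · rw [indicator_of_mem hk]; rw [ee_mul]
      · rw [indicator_of_notMem hk]; exact zero_le
    calc _ ≤ ∑' k, ee r N * ee r k := ENNReal.tsum_le_tsum this
      _ = ee r N * Zfull r := by rw [ENNReal.tsum_mul_left, Zfull]
  calc Ztail r N ≤ _ := step1
    _ ≤ (ee r N * Zfull r) * N := by
        rw [count]; exact mul_le_mul_left left _
    _ = ((N : ℝ≥0∞) * ee r N) * Zfull r := by ring
    _ = ENNReal.ofReal ((N : ℝ) ^ (1 - r)) * Zfull r := by rw [coef_eq hr hN]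

lemma Zfull_le (hr : 1 < r) (hq : 0 < q) : Zfull r ≤ DD r q * LL r q := by
  rw [DD, LL, tsum_mul_tsum, Zfull]
  refine tsum_le_tsum_inj _ _ {m | 0 < m}
    (fun a ha => by
      have : a = 0 := by simpa using ha
      rw [this, ee_zero (by linarith : (0:ℝ) < r)])
    (fun m => (sp q m, m / sp q m)) ?_ ?_
  · intro a ha b hb h
    rw [Prod.mk.injEq] at h
    have ha' := sp_mul_div (q := q) (show a ≠ 0 from (show 0 < a from ha).ne')
    have hb' := sp_mul_div (q := q) (show b ≠ 0 from (show 0 < b from hb).ne')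
    calc a = sp q a * (a / sp q a) := ha'.symm
      _ = sp q b * (b / sp q b) := by rw [h.2, h.1]
      _ = b := hb'
  · intro m hm
    have hm0 : m ≠ 0 := (show 0 < m from hm).ne'
    rw [indicator_of_mem sp_factored,
      indicator_of_mem (show m / sp q m ∈ copSet q from
        ⟨sp_div_pos hm0, coprime_div_sp hm0 hq.ne'⟩),
      ← ee_mul, sp_mul_div hm0]

lemma TT_le (hr : 1 < r) (hq : 0 < q) (hN : 1 ≤ N) :
    TT r q N ≤ ENNReal.ofReal ((N : ℝ) ^ (1 - r)) * LL r q := by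
  have hD0 : DD r q ≠ 0 := by
    intro h
    exact absurd (h ▸ one_le_DD (r := r) (q := q)) (by simp)
  have hDt : DD r q ≠ ⊤ := ne_top_of_le_ne_top (Zfull_ne_top hr) DD_le_Zfull
  rw [← ENNReal.mul_le_mul_iff_right hD0 hDt]
  calc DD r q * TT r q N ≤ Ztail r N := DD_mul_TT_le hr hq
    _ ≤ ENNReal.ofReal ((N : ℝ) ^ (1 - r)) * Zfull r := Ztail_le hr hN
    _ ≤ ENNReal.ofReal ((N : ℝ) ^ (1 - r)) * (DD r q * LL r q) :=
        mul_le_mul_right (Zfull_le hr hq) _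
    _ = DD r q * (ENNReal.ofReal ((N : ℝ) ^ (1 - r)) * LL r q) := by ring


def pairSet (q N : ℕ) : Set (ℕ × ℕ) :=
  {p | p.1 ∈ Finset.Icc 1 N ∧ Squarefree p.1 ∧ Nat.Coprime p.1 q ∧
       p.2 ∈ Nat.factoredNumbers p.1.primeFactors}

noncomputable def SS (r : ℝ) (q N : ℕ) : ℝ≥0∞ :=
  ∑' p : ℕ × ℕ, (pairSet q N).indicator (fun p => ee r p.1 * ee r p.2) p

variable {r : ℝ} {q N : ℕ}

lemma LL_le_Zfull : LL r q ≤ Zfull r :=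
  ENNReal.tsum_le_tsum fun m => Set.indicator_le_self _ _ m

lemma LL_ne_top (hr : 1 < r) : LL r q ≠ ⊤ := ne_top_of_le_ne_top (Zfull_ne_top hr) LL_le_Zfull

lemma LL_eq_ofReal (hr : 1 < r) :
    ENNReal.ofReal (∑' n : ℕ, if 0 < n ∧ Nat.Coprime n q then (n : ℝ) ^ (-r) else 0) = LL r q := by
  have hnn : ∀ n : ℕ, 0 ≤ (if 0 < n ∧ Nat.Coprime n q then (n : ℝ) ^ (-r) else 0) := by
    intro n; split
    · exact Real.rpow_nonneg (Nat.cast_nonneg _) _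
    · exact le_rfl
  have hsum : Summable (fun n : ℕ => if 0 < n ∧ Nat.Coprime n q then (n : ℝ) ^ (-r) else 0) := by
    refine Summable.of_nonneg_of_le hnn (fun n => ?_) (summable_rpow hr)
    split
    · exact le_rfl
    · exact Real.rpow_nonneg (Nat.cast_nonneg _) _
  rw [ENNReal.ofReal_tsum_of_nonneg hnn hsum, LL]
  refine tsum_congr fun n => ?_
  by_cases h : 0 < n ∧ Nat.Coprime n q
  · rw [if_pos h, indicator_of_mem (show n ∈ copSet q from h)]; rfl
  · rw [if_neg h, indicator_of_notMem (show n ∉ copSet q from h), ENNReal.ofReal_zero]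

lemma SS_le_LL (hq : 0 < q) : SS r q N ≤ LL r q := by
  refine tsum_le_tsum_inj _ _ (pairSet q N) (fun p hp => indicator_of_notMem hp _)
    (fun p => p.1 * p.2) ?_ ?_
  · have key : ∀ n j : ℕ, n ∈ Finset.Icc 1 N → Squarefree n →
        j ∈ Nat.factoredNumbers n.primeFactors → (∏ p ∈ (n * j).primeFactors, p) = n := by
      intro n j hI hsq hf
      obtain ⟨hj0, hsub⟩ := Nat.mem_factoredNumbers_iff_primeFactors_subset.mp hf
      have hn0 : n ≠ 0 := by
        have := Finset.mem_Icc.mp hI; omega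
      rw [Nat.primeFactors_mul hn0 hj0, Finset.union_eq_left.mpr hsub,
        Nat.prod_primeFactors_of_squarefree hsq]
    rintro ⟨n₁, j₁⟩ ⟨hI₁, hsq₁, hc₁, hf₁⟩ ⟨n₂, j₂⟩ ⟨hI₂, hsq₂, hc₂, hf₂⟩ h
    have h' : n₁ * j₁ = n₂ * j₂ := h
    have hn : n₁ = n₂ := by
      rw [← key n₁ j₁ hI₁ hsq₁ hf₁, ← key n₂ j₂ hI₂ hsq₂ hf₂, h']
    have hn₁1 : 0 < n₁ := (Finset.mem_Icc.mp hI₁).1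
    refine Prod.ext hn ?_
    rw [hn] at h'
    exact Nat.eq_of_mul_eq_mul_left ((hn ▸ hn₁1)) h'
  · rintro ⟨n, j⟩ ⟨hI, hsq, hc, hf⟩
    obtain ⟨hj0, hsub⟩ := Nat.mem_factoredNumbers_iff_primeFactors_subset.mp hf
    have hn1 : 1 ≤ n := (Finset.mem_Icc.mp hI).1
    have hcj : j.Coprime q := by
      rw [← Nat.disjoint_primeFactors hj0 hq.ne']
      exact hc.disjoint_primeFactors.mono_left hsub
    have hmem : n * j ∈ copSet q :=
      ⟨Nat.mul_pos hn1 (Nat.pos_of_ne_zero hj0), hc.mul hcj⟩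
    rw [indicator_of_mem (show (n, j) ∈ pairSet q N from ⟨hI, hsq, hc, hf⟩),
      indicator_of_mem hmem, ← ee_mul]

lemma PP_le_SS : PP r q N ≤ SS r q N := by
  refine tsum_le_tsum_inj _ _ (copSet q ∩ {m | m ≤ N})
    (fun m hm => indicator_of_notMem hm _) (fun m => (rad m, m / rad m)) ?_ ?_
  · intro a _ b _ h
    rw [Prod.mk.injEq] at h
    have ha' : rad a * (a / rad a) = a := Nat.mul_div_cancel' rad_dvd
    have hb' : rad b * (b / rad b) = b := Nat.mul_div_cancel' rad_dvd
    calc a = rad a * (a / rad a) := ha'.symm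
      _ = rad b * (b / rad b) := by rw [h.2, h.1]
      _ = b := hb'
  · intro m hm
    obtain ⟨hmc, hmN⟩ := hm
    have hm0 : m ≠ 0 := hmc.1.ne'
    have hmN' : m ≤ N := hmN
    have hdvd : m / rad m ∣ m := ⟨rad m, by rw [mul_comm]; exact (Nat.mul_div_cancel' rad_dvd).symm⟩
    have hmem : (rad m, m / rad m) ∈ pairSet q N := by
      refine ⟨?_, rad_squarefree, Nat.Coprime.coprime_dvd_left rad_dvd hmc.2, ?_⟩
      · rw [Finset.mem_Icc]
        exact ⟨Nat.pos_of_ne_zero rad_ne_zero,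
          le_trans (Nat.le_of_dvd hmc.1 rad_dvd) hmN'⟩
      · rw [Nat.mem_factoredNumbers_iff_primeFactors_subset, rad_primeFactors]
        refine ⟨(Nat.div_pos (Nat.le_of_dvd hmc.1 rad_dvd) (Nat.pos_of_ne_zero rad_ne_zero)).ne', ?_⟩
        exact Nat.primeFactors_mono hdvd hm0
    rw [indicator_of_mem (Set.mem_inter hmc hmN), indicator_of_mem hmem, ← ee_mul,
      Nat.mul_div_cancel' rad_dvd]


lemma denom_pos (hr : 1 < r) {n : ℕ} (hn : 1 ≤ n) :
    0 < (n : ℝ) ^ r * ∏ p ∈ n.primeFactors, (1 - (p : ℝ) ^ (-r)) := by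
  have h1 : (0 : ℝ) < (n : ℝ) ^ r :=
    Real.rpow_pos_of_pos (by exact_mod_cast hn) r
  have h2 : 0 < ∏ p ∈ n.primeFactors, (1 - (p : ℝ) ^ (-r)) := by
    refine Finset.prod_pos fun p hp => ?_
    have hp2 : 1 < (p : ℝ) := by
      exact_mod_cast (Nat.prime_of_mem_primeFactors hp).one_lt
    have := Real.rpow_lt_one_of_one_lt_of_neg hp2 (by linarith : -r < 0)
    linarith
  exact mul_pos h1 h2

lemma ofReal_S_eq (hr : 1 < r) (hq : 0 < q) :
    ENNReal.ofReal (∑ n ∈ (Finset.Icc 1 N).filter (fun n => Nat.Coprime n q),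
        ((μ n : ℝ) ^ 2 / ((n : ℝ) ^ r * ∏ p ∈ n.primeFactors, (1 - (p : ℝ) ^ (-r)))))
      = SS r q N := by
  set F₀ := (Finset.Icc 1 N).filter (fun n => Nat.Coprime n q) with hF₀
  set F₁ := F₀.filter Squarefree with hF₁
  set g : ℕ → ℝ := fun n =>
    (μ n : ℝ) ^ 2 / ((n : ℝ) ^ r * ∏ p ∈ n.primeFactors, (1 - (p : ℝ) ^ (-r))) with hg
  have hgnn : ∀ n ∈ F₀, 0 ≤ g n := by
    intro n hn
    have hn1 : 1 ≤ n := (Finset.mem_Icc.mp (Finset.mem_filter.mp hn).1).1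
    exact div_nonneg (sq_nonneg _) (denom_pos hr hn1).le
  -- kill non-squarefree terms
  have hsq_filter : ∑ n ∈ F₁, g n = ∑ n ∈ F₀, g n := by
    refine Finset.sum_filter_of_ne fun n _ hgn => ?_
    by_contra hnsq
    exact hgn (by simp [hg, moebius_eq_zero_of_not_squarefree hnsq])
  -- per-term identity on F₁
  have hterm : ∀ n ∈ F₁, ENNReal.ofReal (g n)
      = ∑' j : ℕ, (Nat.factoredNumbers n.primeFactors).indicator
          (fun j => ee r n * ee r j) j := by
    intro n hn
    obtain ⟨hn0, hsq⟩ := Finset.mem_filter.mp hn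
    obtain ⟨hIcc, _hcop⟩ := Finset.mem_filter.mp hn0
    have hn1 : 1 ≤ n := (Finset.mem_Icc.mp hIcc).1
    have hμ : (μ n : ℝ) ^ 2 = 1 := by
      have := moebius_sq_eq_one_of_squarefree hsq
      exact_mod_cast congrArg (fun z : ℤ => (z : ℝ)) this
    have hgn : g n = (n : ℝ) ^ (-r) *
        ∑' m : Nat.factoredNumbers n.primeFactors, ((m : ℕ) : ℝ) ^ (-r) := by
      simp only [hg]
      rw [← euler_prod hr _ (fun p hp => Nat.prime_of_mem_primeFactors hp)]
      rw [hμ, one_div, mul_inv, Finset.prod_inv_distrib,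
        Real.rpow_neg (Nat.cast_nonneg n)]
    rw [hgn, ENNReal.ofReal_mul (Real.rpow_nonneg (Nat.cast_nonneg n) _),
      ofReal_tsum_subtype hr, ← ENNReal.tsum_mul_left]
    refine tsum_congr fun j => ?_
    by_cases hj : j ∈ Nat.factoredNumbers n.primeFactors
    · rw [indicator_of_mem hj, indicator_of_mem hj]; rfl
    · rw [indicator_of_notMem hj, indicator_of_notMem hj, mul_zero]
  -- assemble
  have hfrom_pairs : SS r q N = ∑ n ∈ F₁, ENNReal.ofReal (g n) := by
    rw [SS, ENNReal.tsum_prod']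
    rw [tsum_eq_sum (s := F₁) ?_]
    · refine Finset.sum_congr rfl fun n hn => ?_
      rw [hterm n hn]
      obtain ⟨hn0, hsq⟩ := Finset.mem_filter.mp hn
      obtain ⟨hIcc, hcop⟩ := Finset.mem_filter.mp hn0
      refine tsum_congr fun j => ?_
      by_cases hj : j ∈ Nat.factoredNumbers n.primeFactors
      · rw [indicator_of_mem (show (n, j) ∈ pairSet q N from ⟨hIcc, hsq, hcop, hj⟩),
          indicator_of_mem hj]
      · rw [indicator_of_notMem (show (n, j) ∉ pairSet q N from fun hmem => hj hmem.2.2.2),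
          indicator_of_notMem hj]
    · intro n hn
      rw [ENNReal.tsum_eq_zero]
      intro j
      refine indicator_of_notMem (fun hmem => hn ?_) _
      rw [hF₁, Finset.mem_filter, hF₀, Finset.mem_filter]
      exact ⟨⟨hmem.1, hmem.2.2.1⟩, hmem.2.1⟩
  rw [← hsq_filter,
    ENNReal.ofReal_sum_of_nonneg (fun n hn => hgnn n (Finset.mem_of_mem_filter n hn)),
    hfrom_pairs]


theorem key (hr : 1 < r) (hq : 0 < q) (hN : 1 ≤ N) :
    |(∑ n ∈ (Finset.Icc 1 N).filter (fun n => Nat.Coprime n q),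
        ((μ n : ℝ) ^ 2 / ((n : ℝ) ^ r * ∏ p ∈ n.primeFactors, (1 - (p : ℝ) ^ (-r))))) -
      (∑' n : ℕ, if 0 < n ∧ Nat.Coprime n q then (n : ℝ) ^ (-r) else 0)|
    ≤ (N : ℝ) ^ (1 - r) * (∑' n : ℕ, if 0 < n ∧ Nat.Coprime n q then (n : ℝ) ^ (-r) else 0) := by
  set Sr := ∑ n ∈ (Finset.Icc 1 N).filter (fun n => Nat.Coprime n q),
      ((μ n : ℝ) ^ 2 / ((n : ℝ) ^ r * ∏ p ∈ n.primeFactors, (1 - (p : ℝ) ^ (-r)))) with hSr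
  set Lr := ∑' n : ℕ, (if 0 < n ∧ Nat.Coprime n q then (n : ℝ) ^ (-r) else 0) with hLr
  have hLnn : 0 ≤ Lr := by
    refine tsum_nonneg fun n => ?_
    split
    · exact Real.rpow_nonneg (Nat.cast_nonneg _) _
    · exact le_rfl
  have hSnn : 0 ≤ Sr := by
    refine Finset.sum_nonneg fun n hn => ?_
    have hn1 : 1 ≤ n := (Finset.mem_Icc.mp (Finset.mem_filter.mp hn).1).1
    exact div_nonneg (sq_nonneg _) (denom_pos hr hn1).le
  have hNnn : (0:ℝ) ≤ (N : ℝ) ^ (1 - r) := Real.rpow_nonneg (Nat.cast_nonneg _) _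
  have hLe : ENNReal.ofReal Lr = LL r q := LL_eq_ofReal hr
  have hSe : ENNReal.ofReal Sr = SS r q N := ofReal_S_eq hr hq
  have hS_le_L : Sr ≤ Lr := by
    rw [← ENNReal.ofReal_le_ofReal_iff hLnn, hLe, hSe]
    exact SS_le_LL hq
  have h2 : LL r q ≤ SS r q N + ENNReal.ofReal ((N : ℝ) ^ (1 - r)) * LL r q :=
    le_trans LL_split (add_le_add PP_le_SS (TT_le hr hq hN))
  have h3 : Lr ≤ Sr + (N : ℝ) ^ (1 - r) * Lr := by
    have hnn2 : 0 ≤ Sr + (N : ℝ) ^ (1 - r) * Lr := by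
      have := mul_nonneg hNnn hLnn; linarith
    rw [← ENNReal.ofReal_le_ofReal_iff hnn2, hLe,
      ENNReal.ofReal_add hSnn (mul_nonneg hNnn hLnn), ENNReal.ofReal_mul hNnn, hLe, hSe]
    exact h2
  have habs : |Sr - Lr| = Lr - Sr := by
    rw [abs_sub_comm]
    exact abs_of_nonneg (sub_nonneg.mpr hS_le_L)
  rw [habs]
  linarith


end SumMoebiusAux

/-- For `s > 1/2` close to `1/2`, `q ≥ 1` and `x > 1`:
`Σ_{n ≤ x, (n,q)=1} μ(n)²/φ_{2s}(n) = L(2s, χ_{0,q}) (1 + O(x^{1−2s}))`,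
where `φ_{2s}(n) = n^{2s} Π_{p|n}(1 − p^{−2s})` and
`L(2s, χ_{0,q}) = Σ_{(n,q)=1} n^{−2s}`. -/
theorem sum_moebius_sq_div_phi_asymptotic :
    ∃ δ C : ℝ, 0 < δ ∧ 0 < C ∧ ∀ s : ℝ, 1 / 2 < s → s < 1 / 2 + δ →
      ∀ q : ℕ, 0 < q → ∀ x : ℝ, 1 < x →
        |(∑ n ∈ (Finset.Icc 1 ⌊x⌋₊).filter (fun n => Nat.Coprime n q),
              (μ n : ℝ) ^ 2 /
                ((n : ℝ) ^ (2 * s) * ∏ p ∈ n.primeFactors, (1 - (p : ℝ) ^ (-(2 * s))))) -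
            (∑' n : ℕ, if 0 < n ∧ Nat.Coprime n q then (n : ℝ) ^ (-(2 * s)) else 0)|
          ≤ C * x ^ (1 - 2 * s) *
              (∑' n : ℕ, if 0 < n ∧ Nat.Coprime n q then (n : ℝ) ^ (-(2 * s)) else 0) := by
  refine ⟨1/2, 2, by norm_num, by norm_num, ?_⟩
  intro s hs1 hs2 q hq x hx
  have hr1 : 1 < 2 * s := by linarith
  have hr2 : 2 * s < 2 := by linarith
  have hx0 : (0:ℝ) < x := by linarith
  set N := ⌊x⌋₊ with hN
  have hN1 : 1 ≤ N := Nat.le_floor (by exact_mod_cast hx.le)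
  have hkey := SumMoebiusAux.key (r := 2 * s) (q := q) (N := N) hr1 hq hN1
  set Lr := ∑' n : ℕ, (if 0 < n ∧ Nat.Coprime n q then (n : ℝ) ^ (-(2 * s)) else 0) with hLr
  have hLnn : 0 ≤ Lr := by
    refine tsum_nonneg fun n => ?_
    split
    · exact Real.rpow_nonneg (Nat.cast_nonneg _) _
    · exact le_rfl
  have hN2 : x / 2 ≤ (N : ℝ) := by
    rcases le_or_gt x 2 with h | h
    · have : (1:ℝ) ≤ (N:ℝ) := by exact_mod_cast hN1
      linarith
    · have := Nat.sub_one_lt_floor x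
      rw [← hN] at this
      linarith
  have hNpow : (N : ℝ) ^ (1 - 2 * s) ≤ 2 * x ^ (1 - 2 * s) := by
    have h1 : (N : ℝ) ^ (1 - 2 * s) ≤ (x / 2) ^ (1 - 2 * s) :=
      Real.rpow_le_rpow_of_nonpos (by linarith) hN2 (by linarith)
    have h2 : (x / 2) ^ (1 - 2 * s) = x ^ (1 - 2 * s) / 2 ^ (1 - 2 * s) :=
      Real.div_rpow hx0.le (by norm_num : (0:ℝ) ≤ 2) _
    have h3 : ((2:ℝ))⁻¹ ≤ (2:ℝ) ^ (1 - 2 * s) := by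
      have := Real.rpow_le_rpow_of_exponent_le (by norm_num : (1:ℝ) ≤ 2)
        (by linarith : (-1 : ℝ) ≤ 1 - 2 * s)
      rwa [Real.rpow_neg_one] at this
    have h4 : (0:ℝ) < 2 ^ (1 - 2 * s) := Real.rpow_pos_of_pos (by norm_num) _
    have h5 : x ^ (1 - 2 * s) / 2 ^ (1 - 2 * s) ≤ x ^ (1 - 2 * s) / (2:ℝ)⁻¹ := by
      apply div_le_div_of_nonneg_left (Real.rpow_nonneg hx0.le _) (by norm_num) h3
    have h6 : x ^ (1 - 2 * s) / (2:ℝ)⁻¹ = 2 * x ^ (1 - 2 * s) := by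
      field_simp
    calc (N : ℝ) ^ (1 - 2 * s) ≤ (x / 2) ^ (1 - 2 * s) := h1
      _ = x ^ (1 - 2 * s) / 2 ^ (1 - 2 * s) := h2
      _ ≤ x ^ (1 - 2 * s) / (2:ℝ)⁻¹ := h5
      _ = 2 * x ^ (1 - 2 * s) := h6
  calc _ ≤ (N : ℝ) ^ (1 - 2 * s) * Lr := hkey
    _ ≤ (2 * x ^ (1 - 2 * s)) * Lr := mul_le_mul_of_nonneg_right hNpow hLnn
    _ = 2 * x ^ (1 - 2 * s) * Lr := by ring
end
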